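/- arXiv:2503.02314 — 6 statements merged into one kernel-verified Lean document; each statement's English description precedes it below -/
import Mathlib

section
/- For all 0 ≤ s < t ≤ T, the operators ι_t^* satisfy ‖ι_t^* − ι_s^*‖_{L(H)} ≤ ∫_s^t ‖Φ(r)‖_{L(H)} dr. -/
open MeasureTheory Set
open scoped RealInnerProductSpace

lemma selfadjoint_opNorm_le
    {H : Type*} [NormedAddCommGroup H] [InnerProductSpace ℝ H]
    (A : H →L[ℝ] H) (hA : ∀ x y : H, ⟪A x, y⟫ = ⟪x, A y⟫)
    {C : ℝ} (hC : 0 ≤ C) (h : ∀ x : H, |⟪A x, x⟫| ≤ C * ‖x‖ ^ 2) :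
    ‖A‖ ≤ C := by
  have key : ∀ x y : H, |⟪A x, y⟫| ≤ C / 2 * (‖x‖ ^ 2 + ‖y‖ ^ 2) := by
    intro x y
    have hpol : ⟪A (x + y), x + y⟫ - ⟪A (x - y), x - y⟫ = 4 * ⟪A x, y⟫ := by
      simp only [map_add, map_sub, inner_add_add_self, inner_sub_sub_self,
        inner_add_left, inner_sub_left, inner_add_right, inner_sub_right]
      ring_nf
      rw [hA y x, real_inner_comm y (A x)]
      ring
    have h3 : |⟪A (x + y), x + y⟫ - ⟪A (x - y), x - y⟫| = 4 * |⟪A x, y⟫| := by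
      rw [hpol, abs_mul]; norm_num
    have h4 := abs_sub (⟪A (x+y), x+y⟫) (⟪A (x-y), x-y⟫)
    have h5 := h (x + y)
    have h6 := h (x - y)
    have hpar : ‖x + y‖ ^ 2 + ‖x - y‖ ^ 2 = 2 * (‖x‖ ^ 2 + ‖y‖ ^ 2) := by
      have := norm_add_sq_real x y
      have := norm_sub_sq_real x y
      linarith
    nlinarith [h3 ▸ h4]
  refine A.opNorm_le_bound hC fun x => ?_
  rcases eq_or_ne (A x) 0 with h0 | h0
  · simp [h0]; positivity
  · have hAx : 0 < ‖A x‖ := norm_pos_iff.mpr h0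
    have hx : 0 < ‖x‖ := by
      by_contra hx
      push_neg at hx
      have : x = 0 := norm_le_zero_iff.mp hx
      simp [this] at h0
    have hkey := key x ((‖x‖ / ‖A x‖) • A x)
    rw [real_inner_smul_right, real_inner_self_eq_norm_sq, norm_smul,
      Real.norm_eq_abs, abs_div, abs_of_nonneg (norm_nonneg x),
      abs_of_nonneg (norm_nonneg (A x))] at hkey
    have e1 : ‖x‖ / ‖A x‖ * ‖A x‖ ^ 2 = ‖x‖ * ‖A x‖ := by field_simp
    have e3 : (‖x‖ / ‖A x‖ * ‖A x‖) ^ 2 = ‖x‖ ^ 2 := by field_simp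
    rw [e1, e3, abs_of_nonneg (by positivity)] at hkey
    nlinarith

/-- For `0 ≤ s < t ≤ T`, `‖ι_t^* − ι_s^*‖ ≤ ∫_s^t ‖Φ(r)‖ dr`. -/
theorem iota_lipschitz_bound
    {H : Type*} [NormedAddCommGroup H] [InnerProductSpace ℝ H] [CompleteSpace H]
    (T : ℝ) (hT : 0 < T)
    (ip : ℝ → H → H → ℝ)
    (hsymm : ∀ t ∈ Icc (0:ℝ) T, ∀ x y : H, ip t x y = ip t y x)
    (hadd : ∀ t ∈ Icc (0:ℝ) T, ∀ x x' y : H, ip t (x + x') y = ip t x y + ip t x' y)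
    (hsmul : ∀ t ∈ Icc (0:ℝ) T, ∀ (c : ℝ) (x y : H), ip t (c • x) y = c * ip t x y)
    (hip0 : ∀ x y : H, ip 0 x y = ⟪x, y⟫)
    (c1 : ℝ) (hc1 : 1 ≤ c1)
    (hC1 : ∀ t ∈ Icc (0:ℝ) T, ∀ x : H,
      c1⁻¹ * ‖x‖ ≤ Real.sqrt (ip t x x) ∧ Real.sqrt (ip t x x) ≤ c1 * ‖x‖)
    (Φ : ℝ → H →L[ℝ] H)
    (hΦsa : ∀ t ∈ Icc (0:ℝ) T, ∀ x y : H, ⟪Φ t x, y⟫ = ⟪x, Φ t y⟫)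
    (hΦmeas : AEStronglyMeasurable (fun t => Φ t) (volume.restrict (Icc (0:ℝ) T)))
    (hΦint : IntegrableOn (fun t => ‖Φ t‖) (Icc (0:ℝ) T))
    (hC2 : ∀ t ∈ Icc (0:ℝ) T, ∀ x : H, ip t x x - ⟪x, x⟫ = ∫ s in (0:ℝ)..t, ⟪x, Φ s x⟫)
    (ι : ℝ → H →L[ℝ] H)
    (hι : ∀ t ∈ Icc (0:ℝ) T, ∀ x y : H, ⟪ι t x, y⟫ = ip t x y)
    :
    ∀ s t : ℝ, 0 ≤ s → s < t → t ≤ T →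
      ‖ι t - ι s‖ ≤ ∫ r in s..t, ‖Φ r‖ := by
  intro s t hs hst htT
  have hsI : s ∈ Icc (0:ℝ) T := ⟨hs, hst.le.trans htT⟩
  have htI : t ∈ Icc (0:ℝ) T := ⟨hs.trans hst.le, htT⟩
  set A : H →L[ℝ] H := ι t - ι s with hAdef
  -- norm integrability on subintervals
  have hΦiv : ∀ a b : ℝ, a ∈ Icc (0:ℝ) T → b ∈ Icc (0:ℝ) T →
      IntervalIntegrable (fun r => ‖Φ r‖) volume a b := by
    intro a b ha hb
    exact (hΦint.mono_set (uIcc_subset_Icc ha hb)).intervalIntegrable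
  -- integrability of the quadratic form
  have hf : ∀ x : H, IntegrableOn (fun r => ⟪x, Φ r x⟫) (Icc (0:ℝ) T) := by
    intro x
    have hcont : Continuous fun B : H →L[ℝ] H => ⟪x, B x⟫ :=
      continuous_const.inner ((ContinuousLinearMap.apply ℝ H x).continuous)
    have hmeas : AEStronglyMeasurable (fun r => ⟪x, Φ r x⟫)
        (volume.restrict (Icc (0:ℝ) T)) := hcont.comp_aestronglyMeasurable hΦmeas
    refine Integrable.mono' (hΦint.mul_const (‖x‖ ^ 2)) hmeas ?_
    filter_upwards with r
    rw [Real.norm_eq_abs]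
    calc |⟪x, Φ r x⟫| ≤ ‖x‖ * ‖Φ r x‖ := abs_real_inner_le_norm x (Φ r x)
      _ ≤ ‖x‖ * (‖Φ r‖ * ‖x‖) := by
          exact mul_le_mul_of_nonneg_left ((Φ r).le_opNorm x) (norm_nonneg x)
      _ = ‖Φ r‖ * ‖x‖ ^ 2 := by ring
  have hfiv : ∀ x : H, ∀ a b : ℝ, a ∈ Icc (0:ℝ) T → b ∈ Icc (0:ℝ) T →
      IntervalIntegrable (fun r => ⟪x, Φ r x⟫) volume a b := by
    intro x a b ha hb
    exact ((hf x).mono_set (uIcc_subset_Icc ha hb)).intervalIntegrable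
  have h0I : (0:ℝ) ∈ Icc (0:ℝ) T := ⟨le_refl 0, hT.le⟩
  -- A x paired with x equals the integral from s to t
  have hAq : ∀ x : H, ⟪A x, x⟫ = ∫ r in s..t, ⟪x, Φ r x⟫ := by
    intro x
    have h1 := hC2 t htI x
    have h2 := hC2 s hsI x
    have e : ⟪A x, x⟫ = ip t x x - ip s x x := by
      rw [hAdef]
      simp only [ContinuousLinearMap.sub_apply, inner_sub_left]
      rw [hι t htI, hι s hsI]
    rw [e]
    have : ip t x x - ip s x x =
        (∫ r in (0:ℝ)..t, ⟪x, Φ r x⟫) - ∫ r in (0:ℝ)..s, ⟪x, Φ r x⟫ := by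
      linarith
    rw [this, intervalIntegral.integral_interval_sub_left
      (hfiv x 0 t h0I htI) (hfiv x 0 s h0I hsI)]
  -- quadratic form bound
  have hbound : ∀ x : H, |⟪A x, x⟫| ≤ (∫ r in s..t, ‖Φ r‖) * ‖x‖ ^ 2 := by
    intro x
    rw [hAq x]
    calc |∫ r in s..t, ⟪x, Φ r x⟫| ≤ ∫ r in s..t, |⟪x, Φ r x⟫| :=
          intervalIntegral.abs_integral_le_integral_abs hst.le
      _ ≤ ∫ r in s..t, ‖Φ r‖ * ‖x‖ ^ 2 := by
          apply intervalIntegral.integral_mono_on hst.le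
            ((hfiv x s t hsI htI).abs) ((hΦiv s t hsI htI).mul_const _)
          intro r _
          calc |⟪x, Φ r x⟫| ≤ ‖x‖ * ‖Φ r x‖ := abs_real_inner_le_norm x (Φ r x)
            _ ≤ ‖x‖ * (‖Φ r‖ * ‖x‖) :=
                mul_le_mul_of_nonneg_left ((Φ r).le_opNorm x) (norm_nonneg x)
            _ = ‖Φ r‖ * ‖x‖ ^ 2 := by ring
      _ = (∫ r in s..t, ‖Φ r‖) * ‖x‖ ^ 2 := by
          rw [intervalIntegral.integral_mul_const]
  -- A is self-adjoint
  have hAsa : ∀ x y : H, ⟪A x, y⟫ = ⟪x, A y⟫ := by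
    intro x y
    have e1 : ⟪A x, y⟫ = ip t x y - ip s x y := by
      rw [hAdef]
      simp only [ContinuousLinearMap.sub_apply, inner_sub_left]
      rw [hι t htI, hι s hsI]
    have e2 : ⟪x, A y⟫ = ip t y x - ip s y x := by
      rw [real_inner_comm, hAdef]
      simp only [ContinuousLinearMap.sub_apply, inner_sub_left]
      rw [hι t htI, hι s hsI]
    rw [e1, e2, hsymm t htI x y, hsymm s hsI x y]
  have hCnn : 0 ≤ ∫ r in s..t, ‖Φ r‖ :=
    intervalIntegral.integral_nonneg hst.le fun r _ => norm_nonneg _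
  exact selfadjoint_opNorm_le A hAsa hCnn hbound
end

section
/- For all 0 ≤ s < t ≤ T, the inverse operators satisfy ‖ι_{-t}^* − ι_{-s}^*‖_{L(H)} ≤ c1⁴ ∫_s^t ‖Φ(r)‖_{L(H)} dr, where c1 is the constant from (C1). -/
open MeasureTheory Set
open scoped RealInnerProductSpace

/-- For `0 ≤ s < t ≤ T`,
`‖ι_{-t}^* − ι_{-s}^*‖ ≤ c1⁴ ∫_s^t ‖Φ(r)‖ dr`. -/
theorem iota_inv_lipschitz_bound
    {H : Type*} [NormedAddCommGroup H] [InnerProductSpace ℝ H] [CompleteSpace H]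
    (T : ℝ) (hT : 0 < T)
    (ip : ℝ → H → H → ℝ)
    (hsymm : ∀ t ∈ Icc (0:ℝ) T, ∀ x y : H, ip t x y = ip t y x)
    (hadd : ∀ t ∈ Icc (0:ℝ) T, ∀ x x' y : H, ip t (x + x') y = ip t x y + ip t x' y)
    (hsmul : ∀ t ∈ Icc (0:ℝ) T, ∀ (c : ℝ) (x y : H), ip t (c • x) y = c * ip t x y)
    (hip0 : ∀ x y : H, ip 0 x y = ⟪x, y⟫)
    (c1 : ℝ) (hc1 : 1 ≤ c1)
    (hC1 : ∀ t ∈ Icc (0:ℝ) T, ∀ x : H,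
      c1⁻¹ * ‖x‖ ≤ Real.sqrt (ip t x x) ∧ Real.sqrt (ip t x x) ≤ c1 * ‖x‖)
    (Φ : ℝ → H →L[ℝ] H)
    (hΦsa : ∀ t ∈ Icc (0:ℝ) T, ∀ x y : H, ⟪Φ t x, y⟫ = ⟪x, Φ t y⟫)
    (hΦmeas : AEStronglyMeasurable (fun t => Φ t) (volume.restrict (Icc (0:ℝ) T)))
    (hΦint : IntegrableOn (fun t => ‖Φ t‖) (Icc (0:ℝ) T))
    (hC2 : ∀ t ∈ Icc (0:ℝ) T, ∀ x : H, ip t x x - ⟪x, x⟫ = ∫ s in (0:ℝ)..t, ⟪x, Φ s x⟫)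
    (ι : ℝ → H →L[ℝ] H)
    (hι : ∀ t ∈ Icc (0:ℝ) T, ∀ x y : H, ⟪ι t x, y⟫ = ip t x y)
    (ιinv : ℝ → H →L[ℝ] H)
    (hιinv : ∀ t ∈ Icc (0:ℝ) T, (∀ x : H, ιinv t (ι t x) = x) ∧ (∀ x : H, ι t (ιinv t x) = x))
    (hιinvnorm : ∀ t ∈ Icc (0:ℝ) T, ‖ιinv t‖ ≤ c1 ^ 2)
    :
    ∀ s t : ℝ, 0 ≤ s → s < t → t ≤ T →
      ‖ιinv t - ιinv s‖ ≤ c1 ^ 4 * ∫ r in s..t, ‖Φ r‖ := by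
  intro s t hs hst htT
  have hst' : s ≤ t := hst.le
  have hsmem : s ∈ Icc (0:ℝ) T := ⟨hs, hst'.trans htT⟩
  have htmem : t ∈ Icc (0:ℝ) T := ⟨hs.trans hst', htT⟩
  -- interval integrability of ‖Φ‖
  have hΦI : ∀ a b : ℝ, 0 ≤ a → a ≤ b → b ≤ T →
      IntervalIntegrable (fun r => ‖Φ r‖) volume a b := by
    intro a b ha hab hbT
    have hsub : uIcc a b ⊆ Icc (0:ℝ) T := by
      rw [uIcc_of_le hab]; exact Icc_subset_Icc ha hbT
    exact (hΦint.mono_set hsub).intervalIntegrable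
  -- interval integrability of the quadratic integrand
  have hqI : ∀ (z : H) (a b : ℝ), 0 ≤ a → a ≤ b → b ≤ T →
      IntervalIntegrable (fun r => ⟪z, Φ r z⟫) volume a b := by
    intro z a b ha hab hbT
    have hsub : uIcc a b ⊆ Icc (0:ℝ) T := by
      rw [uIcc_of_le hab]; exact Icc_subset_Icc ha hbT
    have hm : AEStronglyMeasurable (fun r => ⟪z, Φ r z⟫) (volume.restrict (uIcc a b)) := by
      have h1 : AEStronglyMeasurable (fun r => Φ r) (volume.restrict (uIcc a b)) :=
        hΦmeas.mono_measure (Measure.restrict_mono hsub le_rfl)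
      exact (Continuous.inner continuous_const
        (ContinuousLinearMap.apply ℝ H z).continuous).comp_aestronglyMeasurable h1
    have hb : IntegrableOn (fun r => ‖z‖ ^ 2 * ‖Φ r‖) (uIcc a b) :=
      (hΦint.mono_set hsub).const_mul _
    refine IntegrableOn.intervalIntegrable (hb.mono' hm ?_)
    filter_upwards with r
    calc ‖⟪z, Φ r z⟫‖ ≤ ‖z‖ * ‖Φ r z‖ := norm_inner_le_norm _ _
      _ ≤ ‖z‖ * (‖Φ r‖ * ‖z‖) := by
          have := (Φ r).le_opNorm z
          have hz := norm_nonneg z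
          nlinarith
      _ = ‖z‖ ^ 2 * ‖Φ r‖ := by ring
  set M : ℝ := ∫ r in s..t, ‖Φ r‖ with hM
  have hM0 : 0 ≤ M := intervalIntegral.integral_nonneg hst' (fun r _ => norm_nonneg _)
  set A : H →L[ℝ] H := ι t - ι s with hA
  -- quadratic form identity and bound
  have hq : ∀ z : H, ⟪A z, z⟫ = ∫ r in s..t, ⟪z, Φ r z⟫ := by
    intro z
    have h1 := hC2 t htmem z
    have h2 := hC2 s hsmem z
    have hsplit := intervalIntegral.integral_add_adjacent_intervals
      (hqI z 0 s le_rfl hs hsmem.2)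
      (hqI z s t hs hst' htT)
    have hAz : ⟪A z, z⟫ = ip t z z - ip s z z := by
      simp only [hA, ContinuousLinearMap.sub_apply, inner_sub_left,
        hι t htmem, hι s hsmem]
    rw [hAz]
    have : ip t z z - ip s z z = (∫ r in (0:ℝ)..t, ⟪z, Φ r z⟫) - ∫ r in (0:ℝ)..s, ⟪z, Φ r z⟫ := by
      linarith
    rw [this, ← hsplit]; ring
  have hqbound : ∀ z : H, |⟪A z, z⟫| ≤ M * ‖z‖ ^ 2 := by
    intro z
    rw [hq z]
    calc |∫ r in s..t, ⟪z, Φ r z⟫| ≤ ∫ r in s..t, ‖⟪z, Φ r z⟫‖ := by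
          exact (Real.norm_eq_abs _) ▸ intervalIntegral.norm_integral_le_integral_norm hst'
      _ ≤ ∫ r in s..t, ‖z‖ ^ 2 * ‖Φ r‖ := by
          refine intervalIntegral.integral_mono_on hst'
            (hqI z s t hs hst' htT).norm ((hΦI s t hs hst' htT).const_mul _) ?_
          intro r _
          calc ‖⟪z, Φ r z⟫‖ ≤ ‖z‖ * ‖Φ r z‖ := norm_inner_le_norm _ _
            _ ≤ ‖z‖ * (‖Φ r‖ * ‖z‖) := by
                have := (Φ r).le_opNorm z
                have hz := norm_nonneg z
                nlinarith
            _ = ‖z‖ ^ 2 * ‖Φ r‖ := by ring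
      _ = M * ‖z‖ ^ 2 := by
          rw [intervalIntegral.integral_const_mul]; ring
  -- self-adjointness
  have hsa : ∀ x y : H, ⟪A x, y⟫ = ⟪A y, x⟫ := by
    intro x y
    simp only [hA, ContinuousLinearMap.sub_apply, inner_sub_left,
      hι t htmem, hι s hsmem, hsymm t htmem x y, hsymm s hsmem x y]
  -- polarization bound
  have hhalf : ∀ x y : H, |⟪A x, y⟫| ≤ M / 2 * (‖x‖ ^ 2 + ‖y‖ ^ 2) := by
    intro x y
    have hpol : ⟪A x, y⟫ = (⟪A (x + y), x + y⟫ - ⟪A (x - y), x - y⟫) / 4 := by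
      have h1 : ⟪A (x + y), x + y⟫ = ⟪A x, x⟫ + ⟪A x, y⟫ + ⟪A y, x⟫ + ⟪A y, y⟫ := by
        simp [map_add, inner_add_left, inner_add_right]; ring
      have h2 : ⟪A (x - y), x - y⟫ = ⟪A x, x⟫ - ⟪A x, y⟫ - ⟪A y, x⟫ + ⟪A y, y⟫ := by
        simp [map_sub, inner_sub_left, inner_sub_right]; ring
      rw [h1, h2, hsa y x]; ring
    rw [hpol]
    have b1 := hqbound (x + y)
    have b2 := hqbound (x - y)
    have hpar : ‖x + y‖ * ‖x + y‖ + ‖x - y‖ * ‖x - y‖ = 2 * (‖x‖ * ‖x‖ + ‖y‖ * ‖y‖) :=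
      by simpa only [sq] using parallelogram_law_with_norm ℝ x y
    have := abs_sub (⟪A (x + y), x + y⟫) (⟪A (x - y), x - y⟫)
    rw [abs_div]
    have h4 : |(4:ℝ)| = 4 := by norm_num
    rw [h4]
    rw [div_le_iff₀ (by norm_num : (0:ℝ) < 4)]
    nlinarith [abs_sub_abs_le_abs_sub (⟪A (x + y), x + y⟫) (⟪A (x - y), x - y⟫),
      abs_abs (⟪A (x + y), x + y⟫), sq_nonneg (‖x+y‖), sq_nonneg (‖x-y‖)]
  have hxy : ∀ x y : H, |⟪A x, y⟫| ≤ M * ‖x‖ * ‖y‖ := by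
    intro x y
    rcases eq_or_ne x 0 with rfl | hx
    · simp
    rcases eq_or_ne y 0 with rfl | hy
    · simp [mul_nonneg (mul_nonneg hM0 (norm_nonneg x)) (norm_nonneg (0:H))]
    have hxn : 0 < ‖x‖ := norm_pos_iff.mpr hx
    have hyn : 0 < ‖y‖ := norm_pos_iff.mpr hy
    set c : ℝ := Real.sqrt (‖y‖ / ‖x‖) with hc
    have hcpos : 0 < c := Real.sqrt_pos.mpr (div_pos hyn hxn)
    have hc2 : c ^ 2 = ‖y‖ / ‖x‖ := Real.sq_sqrt (le_of_lt (div_pos hyn hxn))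
    have key := hhalf (c • x) (c⁻¹ • y)
    have hin : ⟪A (c • x), c⁻¹ • y⟫ = ⟪A x, y⟫ := by
      rw [A.map_smul, real_inner_smul_left, real_inner_smul_right]
      field_simp
    rw [hin] at key
    have hn1 : ‖c • x‖ ^ 2 = c ^ 2 * ‖x‖ ^ 2 := by
      rw [norm_smul, Real.norm_eq_abs, mul_pow, sq_abs]
    have hn2 : ‖c⁻¹ • y‖ ^ 2 = (c ^ 2)⁻¹ * ‖y‖ ^ 2 := by
      rw [norm_smul, Real.norm_eq_abs, mul_pow, sq_abs, inv_pow]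
    rw [hn1, hn2, hc2] at key
    have hxne : (‖x‖:ℝ) ≠ 0 := ne_of_gt hxn
    have hyne : (‖y‖:ℝ) ≠ 0 := ne_of_gt hyn
    have : ‖y‖ / ‖x‖ * ‖x‖ ^ 2 + (‖y‖ / ‖x‖)⁻¹ * ‖y‖ ^ 2 = 2 * (‖x‖ * ‖y‖) := by
      field_simp; ring
    rw [this] at key
    calc |⟪A x, y⟫| ≤ M / 2 * (2 * (‖x‖ * ‖y‖)) := key
      _ = M * ‖x‖ * ‖y‖ := by ring
  have hAnorm : ‖A‖ ≤ M := by
    refine ContinuousLinearMap.opNorm_le_bound A hM0 ?_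
    intro x
    rcases eq_or_ne (A x) 0 with h0 | h0
    · rw [h0]; simp [mul_nonneg hM0 (norm_nonneg x)]
    have hAx : 0 < ‖A x‖ := norm_pos_iff.mpr h0
    have := hxy x (A x)
    have hinner : ⟪A x, A x⟫ = ‖A x‖ ^ 2 := real_inner_self_eq_norm_sq _
    rw [hinner, abs_of_nonneg (by positivity)] at this
    nlinarith
  -- factorization of the difference of inverses
  have hfact : ιinv t - ιinv s = (ιinv t).comp ((ι s - ι t).comp (ιinv s)) := by
    ext x
    simp only [ContinuousLinearMap.sub_apply, ContinuousLinearMap.comp_apply, map_sub]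
    rw [(hιinv s hsmem).2 x, (hιinv t htmem).1 (ιinv s x)]
  have hnrm : ‖ι s - ι t‖ = ‖A‖ := by
    rw [hA, ← norm_neg]; congr 1; abel
  have hιt := hιinvnorm t htmem
  have hιs := hιinvnorm s hsmem
  have hι0 : (0:ℝ) ≤ ‖ιinv t‖ := norm_nonneg _
  have hι0' : (0:ℝ) ≤ ‖ιinv s‖ := norm_nonneg _
  calc ‖ιinv t - ιinv s‖ = ‖(ιinv t).comp ((ι s - ι t).comp (ιinv s))‖ := by rw [hfact]
    _ ≤ ‖ιinv t‖ * ‖(ι s - ι t).comp (ιinv s)‖ := ContinuousLinearMap.opNorm_comp_le _ _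
    _ ≤ ‖ιinv t‖ * (‖ι s - ι t‖ * ‖ιinv s‖) := by
        have := ContinuousLinearMap.opNorm_comp_le (ι s - ι t) (ιinv s)
        nlinarith [norm_nonneg ((ι s - ι t).comp (ιinv s))]
    _ ≤ c1 ^ 2 * (M * c1 ^ 2) := by
        have h1 : ‖ι s - ι t‖ ≤ M := hnrm ▸ hAnorm
        have hn0 := norm_nonneg (ι s - ι t)
        exact mul_le_mul hιt (mul_le_mul h1 hιs hι0' hM0)
          (mul_nonneg hn0 hι0') (sq_nonneg c1)
    _ = c1 ^ 4 * M := by ring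
end

section
/- Assume H is separable. Then there is a full Lebesgue measure subset Γ of [0,T] such that for every s ∈ Γ and for ALL x, y ∈ H simultaneously, the function t ↦ (ι_t^* x, y) is differentiable at s with derivative (Φ(s) x, y). In other words, for almost every s ∈ [0,T] one has: for every x, y ∈ H, lim_{t→s} [(ι_t^* x, y) − (ι_s^* x, y)]/(t − s) = (Φ(s) x, y). -/
open MeasureTheory Set
open scoped RealInnerProductSpace

/-- If `H` is separable, there is a full-measure subset `Γ` of `[0,T]` such
that for every `s ∈ Γ` and all `x, y ∈ H` simultaneously, `t ↦ (ι_t^* x, y)` is differentiable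
at `s` (within `[0,T]`) with derivative `(Φ(s) x, y)`. -/
theorem iota_differentiable_ae
    {H : Type*} [NormedAddCommGroup H] [InnerProductSpace ℝ H] [CompleteSpace H] [TopologicalSpace.SeparableSpace H]
    (T : ℝ) (hT : 0 < T)
    (ip : ℝ → H → H → ℝ)
    (hsymm : ∀ t ∈ Icc (0:ℝ) T, ∀ x y : H, ip t x y = ip t y x)
    (hadd : ∀ t ∈ Icc (0:ℝ) T, ∀ x x' y : H, ip t (x + x') y = ip t x y + ip t x' y)
    (hsmul : ∀ t ∈ Icc (0:ℝ) T, ∀ (c : ℝ) (x y : H), ip t (c • x) y = c * ip t x y)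
    (hip0 : ∀ x y : H, ip 0 x y = ⟪x, y⟫)
    (c1 : ℝ) (hc1 : 1 ≤ c1)
    (hC1 : ∀ t ∈ Icc (0:ℝ) T, ∀ x : H,
      c1⁻¹ * ‖x‖ ≤ Real.sqrt (ip t x x) ∧ Real.sqrt (ip t x x) ≤ c1 * ‖x‖)
    (Φ : ℝ → H →L[ℝ] H)
    (hΦsa : ∀ t ∈ Icc (0:ℝ) T, ∀ x y : H, ⟪Φ t x, y⟫ = ⟪x, Φ t y⟫)
    (hΦmeas : AEStronglyMeasurable (fun t => Φ t) (volume.restrict (Icc (0:ℝ) T)))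
    (hΦint : IntegrableOn (fun t => ‖Φ t‖) (Icc (0:ℝ) T))
    (hC2 : ∀ t ∈ Icc (0:ℝ) T, ∀ x : H, ip t x x - ⟪x, x⟫ = ∫ s in (0:ℝ)..t, ⟪x, Φ s x⟫)
    (ι : ℝ → H →L[ℝ] H)
    (hι : ∀ t ∈ Icc (0:ℝ) T, ∀ x y : H, ⟪ι t x, y⟫ = ip t x y)
    :
    ∃ Γ : Set ℝ, Γ ⊆ Icc (0:ℝ) T ∧ volume (Icc (0:ℝ) T \ Γ) = 0 ∧
      ∀ s ∈ Γ, ∀ x y : H,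
        HasDerivWithinAt (fun t => ⟪ι t x, y⟫) ⟪Φ s x, y⟫ (Icc (0:ℝ) T) s := by
  classical
  -- Φ is Bochner integrable on [0,T]
  have hΦInt : IntegrableOn Φ (Icc (0:ℝ) T) :=
    hΦint.mono' hΦmeas (Filter.Eventually.of_forall fun t => le_refl _)
  set Ψ : ℝ → H →L[ℝ] H := Set.indicator (Icc (0:ℝ) T) Φ with hΨdef
  have hΨint : Integrable Ψ := IntegrableOn.integrable_indicator (f := Φ) hΦInt measurableSet_Icc
  have hΨloc : LocallyIntegrable Ψ := hΨint.locallyIntegrable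
  have hΨeq : ∀ u ∈ Icc (0:ℝ) T, Ψ u = Φ u := fun u hu => Set.indicator_of_mem hu Φ
  -- Lebesgue points
  have hae : ∀ᵐ s : ℝ, Filter.Tendsto
      (fun r => ⨍ u in Metric.closedBall s r, ‖Ψ u - Ψ s‖) (nhdsWithin 0 (Ioi 0)) (nhds 0) := by
    filter_upwards [IsUnifLocDoublingMeasure.ae_tendsto_average_norm_sub
      (μ := (volume : Measure ℝ)) hΨloc 1] with s hs
    exact hs (fun _ => s) id Filter.tendsto_id
      (by filter_upwards [self_mem_nhdsWithin] with r hr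
          exact Metric.mem_closedBall_self (by simpa using (le_of_lt (mem_Ioi.mp hr))))
  set Γ : Set ℝ := Icc (0:ℝ) T ∩ {s | Filter.Tendsto
      (fun r => ⨍ u in Metric.closedBall s r, ‖Ψ u - Ψ s‖) (nhdsWithin 0 (Ioi 0)) (nhds 0)}
    with hΓdef
  refine ⟨Γ, inter_subset_left, ?_, ?_⟩
  · refine measure_mono_null (fun s hs => ?_) (ae_iff.1 hae)
    exact fun h => hs.2 ⟨hs.1, h⟩
  -- integrability of the scalar functions
  have hgmeas : ∀ x y : H, AEStronglyMeasurable (fun u => (⟪Φ u x, y⟫ : ℝ))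
      (volume.restrict (Icc (0:ℝ) T)) := by
    intro x y
    have hcont : Continuous fun A : H →L[ℝ] H => (⟪A x, y⟫ : ℝ) :=
      continuous_inner.comp (((ContinuousLinearMap.apply ℝ H x).continuous).prodMk
        continuous_const)
    exact hcont.comp_aestronglyMeasurable hΦmeas
  have hgint : ∀ x y : H, IntegrableOn (fun u => (⟪Φ u x, y⟫ : ℝ)) (Icc (0:ℝ) T) := by
    intro x y
    refine (hΦint.mul_const (‖x‖ * ‖y‖)).mono' (hgmeas x y)
      (Filter.Eventually.of_forall fun u => ?_)
    have h1 : |(⟪Φ u x, y⟫ : ℝ)| ≤ ‖Φ u x‖ * ‖y‖ := abs_real_inner_le_norm _ _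
    have h2 : ‖Φ u x‖ ≤ ‖Φ u‖ * ‖x‖ := (Φ u).le_opNorm x
    have h3 : ‖Φ u x‖ * ‖y‖ ≤ ‖Φ u‖ * ‖x‖ * ‖y‖ :=
      mul_le_mul_of_nonneg_right h2 (norm_nonneg _)
    calc ‖(⟪Φ u x, y⟫ : ℝ)‖ = |(⟪Φ u x, y⟫ : ℝ)| := rfl
      _ ≤ ‖Φ u x‖ * ‖y‖ := h1
      _ ≤ ‖Φ u‖ * ‖x‖ * ‖y‖ := h3
      _ = ‖Φ u‖ * (‖x‖ * ‖y‖) := by ring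
  have hgii : ∀ (x y : H) (a b : ℝ), a ∈ Icc (0:ℝ) T → b ∈ Icc (0:ℝ) T →
      IntervalIntegrable (fun u => (⟪Φ u x, y⟫ : ℝ)) volume a b := by
    intro x y a b ha hb
    rw [intervalIntegrable_iff]
    exact (hgint x y).mono_set (Set.uIoc_subset_uIcc.trans (Set.uIcc_subset_Icc ha hb))
  -- integral representation of ip t x y
  have hrep : ∀ t ∈ Icc (0:ℝ) T, ∀ x y : H,
      ip t x y - ⟪x, y⟫ = ∫ u in (0:ℝ)..t, (⟪Φ u x, y⟫ : ℝ) := by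
    intro t ht x y
    have h0T : (0:ℝ) ∈ Icc (0:ℝ) T := ⟨le_refl _, le_of_lt hT⟩
    have h1 := hC2 t ht (x + y)
    have h2 := hC2 t ht x
    have h3 := hC2 t ht y
    -- expand the left-hand side
    have e1 : ip t (x + y) (x + y) = ip t x x + ip t x y + ip t x y + ip t y y := by
      rw [hadd t ht, hsymm t ht x (x + y), hadd t ht, hsymm t ht y (x + y), hadd t ht,
        hsymm t ht x y, hsymm t ht y x, hsymm t ht y y]
      ring
    have e2 : (⟪x + y, x + y⟫ : ℝ) = ⟪x, x⟫ + 2 * ⟪x, y⟫ + ⟪y, y⟫ :=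
      real_inner_add_add_self x y
    -- integrability of the three integrands
    have i1 : IntervalIntegrable (fun u => (⟪x + y, Φ u (x + y)⟫ : ℝ)) volume 0 t := by
      have := hgii (x + y) (x + y) 0 t h0T ht
      refine this.congr (fun u _ => ?_)
      exact real_inner_comm _ _
    have i2 : IntervalIntegrable (fun u => (⟪x, Φ u x⟫ : ℝ)) volume 0 t := by
      have := hgii x x 0 t h0T ht
      exact this.congr (fun u _ => real_inner_comm _ _)
    have i3 : IntervalIntegrable (fun u => (⟪y, Φ u y⟫ : ℝ)) volume 0 t := by
      have := hgii y y 0 t h0T ht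
      exact this.congr (fun u _ => real_inner_comm _ _)
    have key : 2 * (ip t x y - ⟪x, y⟫)
        = ∫ u in (0:ℝ)..t, ((⟪x + y, Φ u (x + y)⟫ : ℝ) - ⟪x, Φ u x⟫ - ⟪y, Φ u y⟫) := by
      rw [intervalIntegral.integral_sub (i1.sub i2) i3, intervalIntegral.integral_sub i1 i2,
        ← h1, ← h2, ← h3, e1, e2]
      ring
    have congr1 : ∫ u in (0:ℝ)..t, ((⟪x + y, Φ u (x + y)⟫ : ℝ) - ⟪x, Φ u x⟫ - ⟪y, Φ u y⟫)
        = ∫ u in (0:ℝ)..t, (2 * ⟪Φ u x, y⟫ : ℝ) := by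
      refine intervalIntegral.integral_congr (fun u hu => ?_)
      have huT : u ∈ Icc (0:ℝ) T := (Set.uIcc_subset_Icc h0T ht) hu
      have expand : (⟪x + y, Φ u (x + y)⟫ : ℝ)
          = ⟪x, Φ u x⟫ + ⟪x, Φ u y⟫ + ⟪y, Φ u x⟫ + ⟪y, Φ u y⟫ := by
        rw [map_add, inner_add_left, inner_add_right, inner_add_right]
        ring
      have c1' : (⟪x, Φ u y⟫ : ℝ) = ⟪Φ u x, y⟫ := (hΦsa u huT x y).symm
      have c2' : (⟪y, Φ u x⟫ : ℝ) = ⟪Φ u x, y⟫ := real_inner_comm _ _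
      simp only [expand, c1', c2']
      ring
    rw [congr1, intervalIntegral.integral_const_mul] at key
    linarith
  -- the main differentiability claim for ip
  intro s hs x y
  obtain ⟨hsI, htendS⟩ := hs
  have hmain : HasDerivWithinAt (fun t => ip t x y) (⟪Φ s x, y⟫ : ℝ) (Icc (0:ℝ) T) s := by
    rw [hasDerivWithinAt_iff_tendsto_slope]
    set d : ℝ := ⟪Φ s x, y⟫ with hd
    set C : ℝ := ‖x‖ * ‖y‖ with hC
    have hC0 : 0 ≤ C := mul_nonneg (norm_nonneg _) (norm_nonneg _)
    rw [← tendsto_sub_nhds_zero_iff]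
    have habs : Filter.Tendsto (fun t => |t - s|)
        (nhdsWithin s (Icc (0:ℝ) T \ {s})) (nhdsWithin 0 (Ioi 0)) := by
      rw [tendsto_nhdsWithin_iff]
      constructor
      · have : Filter.Tendsto (fun t : ℝ => |t - s|) (nhds s) (nhds 0) := by
          have hc : Continuous (fun t : ℝ => |t - s|) :=
            (continuous_id.sub continuous_const).abs
          have := hc.tendsto s
          simpa using this
        exact this.mono_left nhdsWithin_le_nhds
      · filter_upwards [self_mem_nhdsWithin] with t ht
        have : t ≠ s := by simpa using ht.2
        exact mem_Ioi.2 (abs_pos.2 (sub_ne_zero.2 this))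
    have hbnd : Filter.Tendsto
        (fun t => 2 * C * ⨍ u in Metric.closedBall s |t - s|, ‖Ψ u - Ψ s‖)
        (nhdsWithin s (Icc (0:ℝ) T \ {s})) (nhds 0) := by
      have := (htendS.comp habs).const_mul (2 * C)
      simpa using this
    refine squeeze_zero_norm' ?_ hbnd
    filter_upwards [self_mem_nhdsWithin] with t ht
    obtain ⟨htI, hts0⟩ := ht
    have hts : t ≠ s := by simpa using hts0
    have hr0 : (0:ℝ) < |t - s| := abs_pos.2 (sub_ne_zero.2 hts)
    set r : ℝ := |t - s| with hr
    -- interval integrability facts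
    have hii_st : IntervalIntegrable (fun u => (⟪Φ u x, y⟫ : ℝ)) volume s t :=
      hgii x y s t hsI htI
    have h0T : (0:ℝ) ∈ Icc (0:ℝ) T := ⟨le_refl _, le_of_lt hT⟩
    have hdiff : ip t x y - ip s x y = ∫ u in s..t, (⟪Φ u x, y⟫ : ℝ) := by
      have ht' := hrep t htI x y
      have hs' := hrep s hsI x y
      have := intervalIntegral.integral_interval_sub_left
        (hgii x y 0 t h0T htI) (hgii x y 0 s h0T hsI)
      linarith [this]
    have hslope : slope (fun t => ip t x y) s t - d
        = (t - s)⁻¹ * ∫ u in s..t, ((⟪Φ u x, y⟫ : ℝ) - d) := by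
      rw [intervalIntegral.integral_sub hii_st intervalIntegrable_const,
        intervalIntegral.integral_const, smul_eq_mul, slope_def_field, hdiff]
      have hts' : t - s ≠ 0 := sub_ne_zero.2 hts
      field_simp
    -- the majorant function
    have hmaj : IntegrableOn (fun u => ‖Ψ u - Ψ s‖ * C) (Metric.closedBall s r) := by
      have : IntegrableOn (fun u => Ψ u - Ψ s) (Metric.closedBall s r) := by
        refine (hΨint.integrableOn).sub (integrableOn_const ?_)
        exact measure_closedBall_lt_top.ne
      exact this.norm.mul_const C
    have hsubset : Set.uIoc s t ⊆ Metric.closedBall s r := by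
      intro u hu
      rw [Real.closedBall_eq_Icc]
      rcases le_total s t with h | h
      · rw [Set.uIoc_of_le h] at hu
        have habs' : r = t - s := by rw [hr, abs_of_nonneg (sub_nonneg.2 h)]
        exact ⟨by linarith [hu.1], by linarith [hu.2]⟩
      · rw [Set.uIoc_of_ge h] at hu
        have habs' : r = s - t := by rw [hr, abs_of_nonpos (sub_nonpos.2 h), neg_sub]
        exact ⟨by linarith [hu.1], by linarith [hu.2]⟩
    have hmaj_uIoc : IntegrableOn (fun u => ‖Ψ u - Ψ s‖ * C) (Set.uIoc s t) :=
      hmaj.mono_set hsubset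
    have hmaj_ii : IntervalIntegrable (fun u => ‖Ψ u - Ψ s‖ * C) volume s t :=
      intervalIntegrable_iff.2 hmaj_uIoc
    -- pointwise bound on the interval
    have hptwise : ∀ u ∈ Set.uIoc s t, ‖(⟪Φ u x, y⟫ : ℝ) - d‖ ≤ ‖Ψ u - Ψ s‖ * C := by
      intro u hu
      have huT : u ∈ Icc (0:ℝ) T := (Set.uIoc_subset_uIcc.trans
        (Set.uIcc_subset_Icc hsI htI)) hu
      have e : (⟪Φ u x, y⟫ : ℝ) - d = ⟪(Φ u - Φ s) x, y⟫ := by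
        rw [hd, ContinuousLinearMap.sub_apply, inner_sub_left]
      have hnorm : ‖Ψ u - Ψ s‖ = ‖Φ u - Φ s‖ := by rw [hΨeq u huT, hΨeq s hsI]
      rw [e, hnorm]
      calc ‖(⟪(Φ u - Φ s) x, y⟫ : ℝ)‖ ≤ ‖(Φ u - Φ s) x‖ * ‖y‖ := abs_real_inner_le_norm _ _
        _ ≤ ‖Φ u - Φ s‖ * ‖x‖ * ‖y‖ :=
            mul_le_mul_of_nonneg_right ((Φ u - Φ s).le_opNorm x) (norm_nonneg _)
        _ = ‖Φ u - Φ s‖ * C := by rw [hC]; ring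
    -- bound the integral
    have hbound1 : ‖∫ u in s..t, ((⟪Φ u x, y⟫ : ℝ) - d)‖
        ≤ |∫ u in s..t, (‖Ψ u - Ψ s‖ * C)| := by
      refine intervalIntegral.norm_integral_le_abs_of_norm_le ?_ hmaj_ii
      exact (ae_restrict_iff' measurableSet_uIoc).2 (Filter.Eventually.of_forall
        (fun u hu => by simpa [hΨeq u ((Set.uIoc_subset_uIcc.trans (Set.uIcc_subset_Icc hsI htI)) hu), hΨeq s hsI] using hptwise u hu))
    have hbound2 : |∫ u in s..t, (‖Ψ u - Ψ s‖ * C)|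
        ≤ ∫ u in Metric.closedBall s r, (‖Ψ u - Ψ s‖ * C) := by
      rw [intervalIntegral.abs_intervalIntegral_eq]
      have hnn : 0 ≤ ∫ u in Set.uIoc s t, (‖Ψ u - Ψ s‖ * C) :=
        setIntegral_nonneg measurableSet_uIoc
          (fun u _ => mul_nonneg (norm_nonneg _) hC0)
      rw [abs_of_nonneg hnn]
      refine setIntegral_mono_set hmaj
        (Filter.Eventually.of_forall fun u => mul_nonneg (norm_nonneg _) hC0)
        (Filter.Eventually.of_forall hsubset)
    have hvol : (volume (Metric.closedBall s r)).toReal = 2 * r := by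
      rw [Real.volume_closedBall]
      exact ENNReal.toReal_ofReal (by positivity)
    have havg : ∫ u in Metric.closedBall s r, (‖Ψ u - Ψ s‖ * C)
        = C * ((2 * r) * ⨍ u in Metric.closedBall s r, ‖Ψ u - Ψ s‖) := by
      rw [integral_mul_const, setAverage_eq, measureReal_def, hvol]
      rw [smul_eq_mul]
      have h2r : (2 * r) ≠ 0 := by positivity
      field_simp
    -- put everything together
    rw [hslope]
    have : ‖(t - s)⁻¹ * ∫ u in s..t, ((⟪Φ u x, y⟫ : ℝ) - d)‖
        = r⁻¹ * ‖∫ u in s..t, ((⟪Φ u x, y⟫ : ℝ) - d)‖ := by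
      rw [norm_mul, Real.norm_eq_abs, abs_inv, hr]
    rw [this]
    have hchain : ‖∫ u in s..t, ((⟪Φ u x, y⟫ : ℝ) - d)‖
        ≤ C * ((2 * r) * ⨍ u in Metric.closedBall s r, ‖Ψ u - Ψ s‖) := by
      rw [← havg]; exact hbound1.trans hbound2
    have havgnn : 0 ≤ ⨍ u in Metric.closedBall s r, ‖Ψ u - Ψ s‖ := by
      rw [setAverage_eq]
      exact smul_nonneg (by positivity)
        (setIntegral_nonneg Metric.isClosed_closedBall.measurableSet fun u _ => norm_nonneg _)
    calc r⁻¹ * ‖∫ u in s..t, ((⟪Φ u x, y⟫ : ℝ) - d)‖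
        ≤ r⁻¹ * (C * ((2 * r) * ⨍ u in Metric.closedBall s r, ‖Ψ u - Ψ s‖)) :=
          mul_le_mul_of_nonneg_left hchain (by positivity)
      _ = 2 * C * ⨍ u in Metric.closedBall s r, ‖Ψ u - Ψ s‖ := by
          field_simp
  -- transfer back to ι
  refine hmain.congr (fun t htI => (hι t htI x y)) (hι s hsI x y)
end

section
/- Assume H is separable. Then for all x, y ∈ H and all t ∈ [0,T], one has (ι_{-t}^* x, y) = (x, y) − ∫_0^t (ι_{-s}^* Φ(s) ι_{-s}^* x, y) ds. -/
open MeasureTheory Set Filter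
open scoped RealInnerProductSpace

section AuxLemmas

lemma aux_intervalIntegrable_of_integrableOn_Icc {E : Type*} [NormedAddCommGroup E]
    {T : ℝ} {g : ℝ → E} (hg : IntegrableOn g (Icc (0:ℝ) T)) {a b : ℝ}
    (ha : a ∈ Icc (0:ℝ) T) (hb : b ∈ Icc (0:ℝ) T) : IntervalIntegrable g volume a b := by
  apply (hg.mono_set _).intervalIntegrable
  rw [uIcc_eq_union]
  exact union_subset (Icc_subset_Icc ha.1 hb.2) (Icc_subset_Icc hb.1 ha.2)

lemma aux_integrableOn_of_bound {E : Type*} [NormedAddCommGroup E] {s : Set ℝ}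
    (hs : MeasurableSet s) {g : ℝ → E} {φ : ℝ → ℝ} (hφ : IntegrableOn φ s)
    (hmeas : AEStronglyMeasurable g (volume.restrict s))
    (hbound : ∀ r ∈ s, ‖g r‖ ≤ φ r) : IntegrableOn g s := by
  apply Integrable.mono hφ hmeas
  rw [ae_restrict_iff' hs]
  filter_upwards with r hr
  exact le_trans (hbound r hr) (le_abs_self _)

end AuxLemmas

lemma triangle_swap {E : Type*} [NormedAddCommGroup E] [NormedSpace ℝ E]
    {t : ℝ} (ht : 0 ≤ t) (F : ℝ → ℝ → E)
    (hint : Integrable (fun p : ℝ × ℝ => F p.1 p.2)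
      ((volume.restrict (Ioc (0:ℝ) t)).prod (volume.restrict (Ioc (0:ℝ) t)))) :
    (∫ s in (0:ℝ)..t, (∫ u in s..t, F u s)) = ∫ u in (0:ℝ)..t, (∫ s in (0:ℝ)..u, F u s) := by
  set μ := volume.restrict (Ioc (0:ℝ) t) with hμ
  -- the function with indicator
  set f : ℝ → ℝ → E := fun s u => Set.indicator (Ioi s) (fun u' => F u' s) u with hf
  have hunc : Function.uncurry f =
      Set.indicator {p : ℝ × ℝ | p.1 < p.2} (fun p => F p.2 p.1) := by
    ext p
    rcases p with ⟨s, u⟩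
    simp only [Function.uncurry, hf, Set.indicator_apply, mem_Ioi, Set.mem_setOf_eq]
  have hmeas_set : MeasurableSet {p : ℝ × ℝ | p.1 < p.2} :=
    measurableSet_lt measurable_fst measurable_snd
  have hint' : Integrable (Function.uncurry f) (μ.prod μ) := by
    rw [hunc]
    apply Integrable.indicator _ hmeas_set
    -- fun p => F p.2 p.1 is integrable since it's hint ∘ swap
    have hswap : Integrable ((fun p : ℝ × ℝ => F p.1 p.2) ∘ Prod.swap) (μ.prod μ) :=
      hint.swap
    exact hswap
  have hswapped := MeasureTheory.integral_integral_swap hint'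
  -- identify LHS
  have hL : (∫ s, ∫ u, f s u ∂μ ∂μ) = ∫ s in (0:ℝ)..t, (∫ u in s..t, F u s) := by
    rw [intervalIntegral.integral_of_le ht]
    apply setIntegral_congr_fun measurableSet_Ioc
    intro s hs
    dsimp only
    have hst : s ≤ t := hs.2
    rw [intervalIntegral.integral_of_le hst]
    rw [hμ]
    rw [MeasureTheory.integral_indicator measurableSet_Ioi]
    rw [Measure.restrict_restrict measurableSet_Ioi]
    have hIset : Ioi s ∩ Ioc 0 t = Ioc s t := by
      ext u
      constructor
      · rintro ⟨hu1, hu2⟩; exact ⟨hu1, hu2.2⟩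
      · rintro ⟨hu1, hu2⟩; exact ⟨hu1, lt_trans hs.1 hu1, hu2⟩
    rw [hIset]
  have hR : (∫ u, ∫ s, f s u ∂μ ∂μ) = ∫ u in (0:ℝ)..t, (∫ s in (0:ℝ)..u, F u s) := by
    rw [intervalIntegral.integral_of_le ht]
    apply setIntegral_congr_fun measurableSet_Ioc
    intro u hu
    dsimp only
    have h0u : (0:ℝ) ≤ u := le_of_lt hu.1
    rw [intervalIntegral.integral_of_le h0u]
    have : ∀ s, f s u = Set.indicator (Iio u) (fun s' => F u s') s := by
      intro s
      simp only [hf, Set.indicator_apply, mem_Ioi, mem_Iio]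
    simp_rw [this]
    rw [hμ, MeasureTheory.integral_indicator measurableSet_Iio]
    rw [Measure.restrict_restrict measurableSet_Iio]
    have hIset : Iio u ∩ Ioc 0 t = Ioo 0 u := by
      ext s
      constructor
      · rintro ⟨hs2, hs1⟩; exact ⟨hs1.1, hs2⟩
      · rintro ⟨hs1, hs2⟩; exact ⟨hs2, hs1, le_trans (le_of_lt hs2) hu.2⟩
    rw [hIset, ← MeasureTheory.integral_Ioc_eq_integral_Ioo]
  rw [← hL, hswapped, hR]

lemma gronwall_zero {T : ℝ} (f φ : ℝ → ℝ) (C : ℝ) (hC : 0 ≤ C)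
    (hf_cont : ContinuousOn f (Icc 0 T))
    (hf_nonneg : ∀ t ∈ Icc (0:ℝ) T, 0 ≤ f t)
    (hφ_nonneg : ∀ s ∈ Icc (0:ℝ) T, 0 ≤ φ s)
    (hφ_int : IntegrableOn φ (Icc (0:ℝ) T))
    (hbound : ∀ t ∈ Icc (0:ℝ) T, f t ≤ C * ∫ s in (0:ℝ)..t, φ s * f s) :
    ∀ t ∈ Icc (0:ℝ) T, f t = 0 := by
  rcases le_or_gt T 0 with hT | hT
  · -- degenerate: Icc 0 T ⊆ {0}
    intro t htmem
    have ht0 : t = 0 := le_antisymm (le_trans htmem.2 hT) htmem.1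
    subst ht0
    have h := hbound 0 htmem
    rw [intervalIntegral.integral_same] at h
    exact le_antisymm (by simpa using h) (hf_nonneg 0 htmem)
  have hT0 : (0:ℝ) ≤ T := hT.le
  have h0mem : (0:ℝ) ∈ Icc (0:ℝ) T := ⟨le_refl 0, hT0⟩
  -- f is bounded on Icc 0 T
  obtain ⟨Mf, hMf⟩ := (isCompact_Icc.image_of_continuousOn hf_cont).isBounded.subset_closedBall 0
  have hMf' : ∀ s ∈ Icc (0:ℝ) T, |f s| ≤ Mf := by
    intro s hs
    have := hMf ⟨s, hs, rfl⟩
    simpa [Metric.mem_closedBall, Real.dist_eq] using this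
  -- φ * f is integrable on Icc 0 T
  have hf_meas : AEStronglyMeasurable f (volume.restrict (Icc (0:ℝ) T)) :=
    hf_cont.aestronglyMeasurable measurableSet_Icc
  have hφf_int : IntegrableOn (fun s => φ s * f s) (Icc (0:ℝ) T) := by
    apply Integrable.mono (hφ_int.norm.const_mul Mf) (hφ_int.aestronglyMeasurable.mul hf_meas)
    rw [ae_restrict_iff' measurableSet_Icc]
    filter_upwards with s hs
    simp only [Pi.mul_apply]
    have h1 : |f s| ≤ Mf := hMf' s hs
    have h2 : 0 ≤ φ s := hφ_nonneg s hs
    have : ‖φ s * f s‖ = φ s * |f s| := by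
      rw [norm_mul]; simp [abs_of_nonneg h2, Real.norm_eq_abs]
    rw [this, Real.norm_eq_abs]
    have : φ s * |f s| ≤ φ s * Mf := mul_le_mul_of_nonneg_left h1 h2
    calc φ s * |f s| ≤ φ s * Mf := this
    _ = Mf * φ s := by ring
    _ ≤ |Mf * ‖φ s‖| := by
        rw [Real.norm_eq_abs, abs_of_nonneg h2]
        exact le_abs_self _
  have hii : ∀ a b : ℝ, a ∈ Icc (0:ℝ) T → b ∈ Icc (0:ℝ) T →
      IntervalIntegrable (fun s => φ s * f s) volume a b := by
    intro a b ha hb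
    apply (hφf_int.mono_set _).intervalIntegrable
    rw [uIcc_eq_union]
    exact union_subset (Icc_subset_Icc ha.1 hb.2) (Icc_subset_Icc hb.1 ha.2)
  have hiiφ : ∀ a b : ℝ, a ∈ Icc (0:ℝ) T → b ∈ Icc (0:ℝ) T →
      IntervalIntegrable φ volume a b := by
    intro a b ha hb
    apply (hφ_int.mono_set _).intervalIntegrable
    rw [uIcc_eq_union]
    exact union_subset (Icc_subset_Icc ha.1 hb.2) (Icc_subset_Icc hb.1 ha.2)
  -- the set S
  set S : Set ℝ := {r ∈ Icc (0:ℝ) T | ∀ s ∈ Icc (0:ℝ) r, f s = 0} with hS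
  have hf0 : f 0 = 0 := by
    have h := hbound 0 h0mem
    rw [intervalIntegral.integral_same] at h
    exact le_antisymm (by simpa using h) (hf_nonneg 0 h0mem)
  have h0S : (0:ℝ) ∈ S := by
    refine ⟨h0mem, ?_⟩
    intro s hs
    have : s = 0 := le_antisymm hs.2 hs.1
    rw [this]; exact hf0
  have hSbdd : BddAbove S := ⟨T, fun r hr => hr.1.2⟩
  have hSne : S.Nonempty := ⟨0, h0S⟩
  set τ := sSup S with hτ
  have hτmem : τ ∈ Icc (0:ℝ) T := ⟨le_csSup hSbdd h0S, csSup_le hSne (fun r hr => hr.1.2)⟩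
  -- all s < τ in [0,τ) vanish
  have hlt : ∀ s, 0 ≤ s → s < τ → f s = 0 := by
    intro s hs0 hsτ
    obtain ⟨r, hrS, hsr⟩ := exists_lt_of_lt_csSup hSne hsτ
    exact hrS.2 s ⟨hs0, hsr.le⟩
  have hint_zero : ∀ b, b ∈ Icc (0:ℝ) T → b ≤ τ → (∫ s in (0:ℝ)..b, φ s * f s) = 0 := by
    intro b hb hbτ
    have : ∀ᵐ s ∂(volume.restrict (Ioc (0:ℝ) b)), φ s * f s = 0 := by
      rw [ae_restrict_iff' measurableSet_Ioc]
      have hne : ∀ᵐ s : ℝ ∂volume, s ≠ b := by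
        have : (volume : Measure ℝ) {b} = 0 := measure_singleton b
        rw [ae_iff]; simpa using this
      filter_upwards [hne] with s hsb hs
      have hsτ : s < τ := lt_of_le_of_ne (le_trans hs.2 hbτ) (by
        intro h; exact hsb (by
          -- s = τ and s ≤ b ≤ τ means s = b
          have := le_antisymm hs.2 (h ▸ hbτ)
          exact this))
      rw [hlt s hs.1.le hsτ, mul_zero]
    rw [intervalIntegral.integral_of_le hb.1]
    exact integral_eq_zero_of_ae this
  have hfτ : f τ = 0 := by
    have h := hbound τ hτmem
    rw [hint_zero τ hτmem le_rfl] at h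
    exact le_antisymm (by simpa using h) (hf_nonneg τ hτmem)
  have hτS : τ ∈ S := by
    refine ⟨hτmem, ?_⟩
    intro s hs
    rcases lt_or_eq_of_le hs.2 with h | h
    · exact hlt s hs.1 h
    · rw [h]; exact hfτ
  -- now show τ = T
  rcases eq_or_lt_of_le hτmem.2 with hτT | hτT
  · intro t htmem
    exact hτS.2 t ⟨htmem.1, hτT ▸ htmem.2⟩
  -- contradiction branch: τ < T
  exfalso
  -- continuity of primitive G at τ
  have hG_cont : ContinuousOn (fun b => ∫ s in τ..b, φ s) (Icc (0:ℝ) T) := by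
    have h := intervalIntegral.continuousOn_primitive_interval' (μ := volume) (b₁ := (0:ℝ))
      (b₂ := T) (a := τ) (f := φ) (hiiφ 0 T h0mem ⟨hT0, le_rfl⟩)
      (by rw [uIcc_of_le hT0]; exact hτmem)
    rwa [uIcc_of_le hT0] at h
  have hcwa : ContinuousWithinAt (fun b => C * ∫ s in τ..b, φ s) (Icc (0:ℝ) T) τ :=
    (continuousWithinAt_const).mul (hG_cont τ hτmem)
  have hval : C * ∫ s in τ..τ, φ s = 0 := by rw [intervalIntegral.integral_same, mul_zero]
  -- eventually within 𝓝[Ioc τ T] τ, the value is < 1/2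
  have hev : ∀ᶠ b in nhdsWithin τ (Ioc τ T), C * (∫ s in τ..b, φ s) < 1/2 := by
    have h1 : Tendsto (fun b => C * ∫ s in τ..b, φ s) (nhdsWithin τ (Ioc τ T)) (nhds 0) := by
      rw [← hval]
      apply hcwa.tendsto.mono_left
      apply nhdsWithin_mono
      intro b hb
      exact ⟨le_trans hτmem.1 hb.1.le, hb.2⟩
    have := h1.eventually_lt_const (by norm_num : (0:ℝ) < 1/2)
    exact this
  have hne : (nhdsWithin τ (Ioc τ T)).NeBot := by
    rw [nhdsWithin_Ioc_eq_nhdsGT hτT]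
    exact nhdsGT_neBot τ
  obtain ⟨b, hbhalf, hbmem⟩ := (hev.and (eventually_mem_nhdsWithin)).exists
  -- hbmem : b ∈ Ioc τ T, hbhalf : C * ∫ τ..b φ < 1/2
  have hbIcc : b ∈ Icc (0:ℝ) T := ⟨le_trans hτmem.1 hbmem.1.le, hbmem.2⟩
  have hτb : τ ≤ b := hbmem.1.le
  -- maximum of f on [τ, b]
  obtain ⟨z, hzmem, hzmax⟩ := isCompact_Icc.exists_isMaxOn (nonempty_Icc.mpr hτb)
    (hf_cont.mono (Icc_subset_Icc hτmem.1 hbmem.2))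
  have hzIcc : z ∈ Icc (0:ℝ) T := ⟨le_trans hτmem.1 hzmem.1, le_trans hzmem.2 hbmem.2⟩
  have hfz_nonneg : 0 ≤ f z := hf_nonneg z hzIcc
  -- f z ≤ C * ∫ τ..z φ f ≤ C * (∫ τ..b φ) * f z ≤ (1/2) f z
  have hsplit : (∫ s in (0:ℝ)..z, φ s * f s) = ∫ s in τ..z, φ s * f s := by
    have := intervalIntegral.integral_add_adjacent_intervals
      (hii 0 τ h0mem hτmem) (hii τ z hτmem hzIcc)
    rw [← this, hint_zero τ hτmem le_rfl, zero_add]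
  have hstep : f z ≤ C * ((∫ s in τ..b, φ s) * f z) := by
    have h1 := hbound z hzIcc
    rw [hsplit] at h1
    have h2 : (∫ s in τ..z, φ s * f s) ≤ ∫ s in τ..z, φ s * f z := by
      apply intervalIntegral.integral_mono_on hzmem.1 (hii τ z hτmem hzIcc)
        ((hiiφ τ z hτmem hzIcc).mul_const _)
      intro w hw
      have hwIcc : w ∈ Icc (0:ℝ) T := ⟨le_trans hτmem.1 hw.1, le_trans hw.2 hzIcc.2⟩
      have := hzmax (Icc_subset_Icc le_rfl hzmem.2 hw)
      exact mul_le_mul_of_nonneg_left this (hφ_nonneg w hwIcc)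
    have h3 : (∫ s in τ..z, φ s * f z) = (∫ s in τ..z, φ s) * f z := by
      rw [← intervalIntegral.integral_mul_const]
    have h4 : (∫ s in τ..z, φ s) * f z ≤ (∫ s in τ..b, φ s) * f z := by
      apply mul_le_mul_of_nonneg_right _ hfz_nonneg
      have := intervalIntegral.integral_add_adjacent_intervals
        (hiiφ τ z hτmem hzIcc) (hiiφ z b hzIcc hbIcc)
      rw [← this]
      have h5 : 0 ≤ ∫ s in z..b, φ s := by
        apply intervalIntegral.integral_nonneg hzmem.2
        intro w hw
        exact hφ_nonneg w ⟨le_trans hzIcc.1 hw.1, le_trans hw.2 hbIcc.2⟩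
      linarith
    calc f z ≤ C * ∫ s in τ..z, φ s * f s := h1
    _ ≤ C * ∫ s in τ..z, φ s * f z := mul_le_mul_of_nonneg_left h2 hC
    _ = C * ((∫ s in τ..z, φ s) * f z) := by rw [h3]
    _ ≤ C * ((∫ s in τ..b, φ s) * f z) := mul_le_mul_of_nonneg_left h4 hC
  have hfz0 : f z = 0 := by
    by_contra hne0
    have hpos : 0 < f z := lt_of_le_of_ne hfz_nonneg (Ne.symm hne0)
    have : f z < 1/2 * f z := by
      calc f z ≤ C * (∫ s in τ..b, φ s) * f z := by
            rw [mul_assoc]; exact hstep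
      _ < 1/2 * f z := mul_lt_mul_of_pos_right hbhalf hpos
    linarith
  -- hence f vanishes on [τ, b], so b ∈ S, contradicting τ = sSup S < b
  have hbS : b ∈ S := by
    refine ⟨hbIcc, ?_⟩
    intro s hs
    rcases le_or_gt τ s with h | h
    · have hsz := hzmax (show s ∈ Icc τ b from ⟨h, hs.2⟩)
      have := hf_nonneg s ⟨hs.1, le_trans hs.2 hbIcc.2⟩
      have : f s ≤ 0 := hfz0 ▸ hsz
      exact le_antisymm this (hf_nonneg s ⟨hs.1, le_trans hs.2 hbIcc.2⟩)
    · exact hlt s hs.1 h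
  have : b ≤ τ := le_csSup hSbdd hbS
  exact absurd hbmem.1 (not_lt.mpr this)
/-- For separable `H`, for all `x, y ∈ H` and `t ∈ [0,T]`,
`(ι_{-t}^* x, y) = (x, y) − ∫_0^t (ι_{-s}^* Φ(s) ι_{-s}^* x, y) ds`. -/
theorem iota_inv_integral_formula
    {H : Type*} [NormedAddCommGroup H] [InnerProductSpace ℝ H] [CompleteSpace H] [TopologicalSpace.SeparableSpace H]
    (T : ℝ) (hT : 0 < T)
    (ip : ℝ → H → H → ℝ)
    (hsymm : ∀ t ∈ Icc (0:ℝ) T, ∀ x y : H, ip t x y = ip t y x)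
    (hadd : ∀ t ∈ Icc (0:ℝ) T, ∀ x x' y : H, ip t (x + x') y = ip t x y + ip t x' y)
    (hsmul : ∀ t ∈ Icc (0:ℝ) T, ∀ (c : ℝ) (x y : H), ip t (c • x) y = c * ip t x y)
    (hip0 : ∀ x y : H, ip 0 x y = ⟪x, y⟫)
    (c1 : ℝ) (hc1 : 1 ≤ c1)
    (hC1 : ∀ t ∈ Icc (0:ℝ) T, ∀ x : H,
      c1⁻¹ * ‖x‖ ≤ Real.sqrt (ip t x x) ∧ Real.sqrt (ip t x x) ≤ c1 * ‖x‖)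
    (Φ : ℝ → H →L[ℝ] H)
    (hΦsa : ∀ t ∈ Icc (0:ℝ) T, ∀ x y : H, ⟪Φ t x, y⟫ = ⟪x, Φ t y⟫)
    (hΦmeas : AEStronglyMeasurable (fun t => Φ t) (volume.restrict (Icc (0:ℝ) T)))
    (hΦint : IntegrableOn (fun t => ‖Φ t‖) (Icc (0:ℝ) T))
    (hC2 : ∀ t ∈ Icc (0:ℝ) T, ∀ x : H, ip t x x - ⟪x, x⟫ = ∫ s in (0:ℝ)..t, ⟪x, Φ s x⟫)
    (ι : ℝ → H →L[ℝ] H)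
    (hι : ∀ t ∈ Icc (0:ℝ) T, ∀ x y : H, ⟪ι t x, y⟫ = ip t x y)
    (ιinv : ℝ → H →L[ℝ] H)
    (hιinv : ∀ t ∈ Icc (0:ℝ) T, (∀ x : H, ιinv t (ι t x) = x) ∧ (∀ x : H, ι t (ιinv t x) = x))
    (hιinvnorm : ∀ t ∈ Icc (0:ℝ) T, ‖ιinv t‖ ≤ c1 ^ 2)
    :
    ∀ t ∈ Icc (0:ℝ) T, ∀ x y : H,
      ⟪ιinv t x, y⟫ = ⟪x, y⟫ - ∫ s in (0:ℝ)..t, ⟪ιinv s (Φ s (ιinv s x)), y⟫ := by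
  have hT0 : (0:ℝ) ≤ T := hT.le
  have h0mem : (0:ℝ) ∈ Icc (0:ℝ) T := ⟨le_rfl, hT0⟩
  have hIccT : ∀ {t : ℝ}, t ∈ Icc (0:ℝ) T → Icc (0:ℝ) t ⊆ Icc (0:ℝ) T :=
    fun ht => Icc_subset_Icc le_rfl ht.2
  -- Φ is Bochner integrable as an operator-valued function
  have hΦInt : IntegrableOn Φ (Icc (0:ℝ) T) :=
    ⟨hΦmeas, (hasFiniteIntegral_norm_iff Φ).mp hΦint.2⟩
  have hΦii : ∀ {a b : ℝ}, a ∈ Icc (0:ℝ) T → b ∈ Icc (0:ℝ) T →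
      IntervalIntegrable Φ volume a b := by
    intro a b ha hb; exact aux_intervalIntegrable_of_integrableOn_Icc hΦInt ha hb
  -- norm bound for ιinv applied to vectors
  have hAop : ∀ t ∈ Icc (0:ℝ) T, ∀ z : H, ‖ιinv t z‖ ≤ c1 ^ 2 * ‖z‖ := fun t ht z =>
    le_trans ((ιinv t).le_opNorm z) (mul_le_mul_of_nonneg_right (hιinvnorm t ht) (norm_nonneg z))
  -- AESM of bilinear application
  have happly : ∀ {g : ℝ → H →L[ℝ] H} {w : ℝ → H} {μ : Measure ℝ},
      AEStronglyMeasurable g μ → AEStronglyMeasurable w μ →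
      AEStronglyMeasurable (fun s => g s (w s)) μ := by
    intro g w μ hg hw
    exact (isBoundedBilinearMap_apply (𝕜 := ℝ) (E := H) (F := H)).continuous.comp_aestronglyMeasurable
      (hg.prodMk hw)
  -- integrability of s ↦ Φ s z
  have hvec_int : ∀ z : H, IntegrableOn (fun s => Φ s z) (Icc (0:ℝ) T) := by
    intro z
    apply aux_integrableOn_of_bound measurableSet_Icc (hΦint.mul_const ‖z‖)
      (happly hΦmeas aestronglyMeasurable_const)
    intro r _
    exact (Φ r).le_opNorm z
  have hvec_ii : ∀ (z : H) {a b : ℝ}, a ∈ Icc (0:ℝ) T → b ∈ Icc (0:ℝ) T →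
      IntervalIntegrable (fun s => Φ s z) volume a b := by
    intro z a b ha hb; exact aux_intervalIntegrable_of_integrableOn_Icc (hvec_int z) ha hb
  -- scalar integrands
  have hsc_meas : ∀ z w : H, AEStronglyMeasurable (fun s => ⟪z, Φ s w⟫)
      (volume.restrict (Icc (0:ℝ) T)) := by
    intro z w
    exact (innerSL ℝ z).continuous.comp_aestronglyMeasurable
      (happly hΦmeas aestronglyMeasurable_const)
  have hsc_ii : ∀ (z w : H) {a b : ℝ}, a ∈ Icc (0:ℝ) T → b ∈ Icc (0:ℝ) T →
      IntervalIntegrable (fun s => ⟪z, Φ s w⟫) volume a b := by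
    intro z w a b ha hb
    apply aux_intervalIntegrable_of_integrableOn_Icc _ ha hb
    apply aux_integrableOn_of_bound measurableSet_Icc ((hΦint.mul_const ‖w‖).const_mul ‖z‖)
      (hsc_meas z w)
    intro r _
    calc ‖⟪z, Φ r w⟫‖ ≤ ‖z‖ * ‖Φ r w‖ := norm_inner_le_norm z (Φ r w)
    _ ≤ ‖z‖ * (‖Φ r‖ * ‖w‖) :=
        mul_le_mul_of_nonneg_left ((Φ r).le_opNorm w) (norm_nonneg z)
  have hsc_meas' : ∀ z w : H, AEStronglyMeasurable (fun s => ⟪Φ s z, w⟫)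
      (volume.restrict (Icc (0:ℝ) T)) := by
    intro z w
    have := (innerSL ℝ w).continuous.comp_aestronglyMeasurable
      (happly hΦmeas (aestronglyMeasurable_const (b := z)))
    apply this.congr
    filter_upwards with s
    exact real_inner_comm _ _
  have hsc_ii' : ∀ (z w : H) {a b : ℝ}, a ∈ Icc (0:ℝ) T → b ∈ Icc (0:ℝ) T →
      IntervalIntegrable (fun s => ⟪Φ s z, w⟫) volume a b := by
    intro z w a b ha hb
    apply aux_intervalIntegrable_of_integrableOn_Icc _ ha hb
    apply aux_integrableOn_of_bound measurableSet_Icc ((hΦint.mul_const ‖z‖).mul_const ‖w‖)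
      (hsc_meas' z w)
    intro r _
    calc ‖⟪Φ r z, w⟫‖ ≤ ‖Φ r z‖ * ‖w‖ := norm_inner_le_norm _ _
    _ ≤ ‖Φ r‖ * ‖z‖ * ‖w‖ :=
        mul_le_mul_of_nonneg_right ((Φ r).le_opNorm z) (norm_nonneg w)
  -- the primitive operator P(t) = ∫_0^t Φ
  set Pop : ℝ → H →L[ℝ] H := fun t => ∫ s in (0:ℝ)..t, Φ s with hPopdef
  have hPop_apply : ∀ t ∈ Icc (0:ℝ) T, ∀ z : H, Pop t z = ∫ s in (0:ℝ)..t, Φ s z := by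
    intro t ht z
    exact ContinuousLinearMap.intervalIntegral_apply (hΦii h0mem ht) z
  have hPop_cont : ContinuousOn Pop (Icc (0:ℝ) T) := by
    have h := intervalIntegral.continuousOn_primitive_interval (a := (0:ℝ)) (b := T)
      (μ := volume) (f := Φ) (by rwa [uIcc_of_le hT0])
    rwa [uIcc_of_le hT0] at h
  -- polarization identity
  have hpolar : ∀ t ∈ Icc (0:ℝ) T, ∀ z w : H,
      ip t z w = ⟪z, w⟫ + ∫ s in (0:ℝ)..t, ⟪Φ s z, w⟫ := by
    intro t ht z w
    have e1 := hC2 t ht (z + w)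
    have e2 := hC2 t ht z
    have e3 := hC2 t ht w
    have hipadd : ip t (z + w) (z + w) = ip t z z + ip t w w + 2 * ip t z w := by
      rw [hadd t ht, hsymm t ht z (z + w), hsymm t ht w (z + w), hadd t ht, hadd t ht,
        hsymm t ht w z]
      ring
    have hinadd : ⟪z + w, z + w⟫ = ⟪z, z⟫ + ⟪w, w⟫ + 2 * ⟪z, w⟫ := by
      rw [real_inner_add_add_self]; ring
    have hinteq : (∫ s in (0:ℝ)..t, ⟪z + w, Φ s (z + w)⟫)
        = (∫ s in (0:ℝ)..t, ⟪z, Φ s z⟫) + (∫ s in (0:ℝ)..t, ⟪w, Φ s w⟫)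
          + 2 * ∫ s in (0:ℝ)..t, ⟪Φ s z, w⟫ := by
      have hcongr : EqOn (fun s => ⟪z + w, Φ s (z + w)⟫)
          (fun s => ⟪z, Φ s z⟫ + ⟪w, Φ s w⟫ + 2 * ⟪Φ s z, w⟫) (uIcc (0:ℝ) t) := by
        intro s hs
        have hsmem : s ∈ Icc (0:ℝ) T := by
          rw [uIcc_of_le ht.1] at hs
          exact hIccT ht hs
        simp only
        rw [map_add (Φ s), inner_add_left, inner_add_right, inner_add_right]
        have h1 : ⟪z, Φ s w⟫ = ⟪Φ s z, w⟫ := (hΦsa s hsmem z w).symm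
        have h2 : ⟪w, Φ s z⟫ = ⟪Φ s z, w⟫ := real_inner_comm _ _
        rw [h1, h2]
        ring
      rw [intervalIntegral.integral_congr hcongr]
      rw [intervalIntegral.integral_add (((hsc_ii z z h0mem ht).add (hsc_ii w w h0mem ht)))
        (((hsc_ii' z w h0mem ht)).const_mul 2)]
      rw [intervalIntegral.integral_add ((hsc_ii z z h0mem ht)) ((hsc_ii w w h0mem ht))]
      rw [intervalIntegral.integral_const_mul]
    rw [hipadd, hinadd] at e1
    rw [hinteq] at e1
    linarith
  -- ι t = 1 + Pop t
  have hι_eq : ∀ t ∈ Icc (0:ℝ) T, ∀ z : H, ι t z = z + Pop t z := by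
    intro t ht z
    apply ext_inner_right ℝ
    intro w
    rw [hι t ht, hpolar t ht, inner_add_left]
    congr 1
    rw [hPop_apply t ht z]
    have hcc := ContinuousLinearMap.intervalIntegral_comp_comm (innerSL ℝ w)
      (hvec_ii z h0mem ht)
    simp only [innerSL_apply_apply] at hcc
    rw [real_inner_comm, ← hcc]
    apply intervalIntegral.integral_congr
    intro s _
    exact real_inner_comm _ _
  -- resolvent identity
  have hres : ∀ t ∈ Icc (0:ℝ) T, ∀ s ∈ Icc (0:ℝ) T, ∀ z : H,
      ιinv t z - ιinv s z = ιinv t (Pop s (ιinv s z) - Pop t (ιinv s z)) := by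
    intro t ht s hs z
    have h1 : ιinv t (ι s (ιinv s z)) = ιinv t z := by rw [(hιinv s hs).2 z]
    have h2 : ιinv t (ι t (ιinv s z)) = ιinv s z := (hιinv t ht).1 _
    calc ιinv t z - ιinv s z = ιinv t (ι s (ιinv s z)) - ιinv t (ι t (ιinv s z)) := by
          rw [h1, h2]
    _ = ιinv t (ι s (ιinv s z) - ι t (ιinv s z)) := (map_sub _ _ _).symm
    _ = ιinv t (Pop s (ιinv s z) - Pop t (ιinv s z)) := by
          rw [hι_eq s hs, hι_eq t ht]
          congr 1
          abel
  -- operator-norm Lipschitz-type bound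
  have hA_lip : ∀ t ∈ Icc (0:ℝ) T, ∀ s ∈ Icc (0:ℝ) T,
      ‖ιinv s - ιinv t‖ ≤ c1 ^ 2 * c1 ^ 2 * ‖Pop s - Pop t‖ := by
    intro t ht s hs
    apply ContinuousLinearMap.opNorm_le_bound
    · positivity
    intro z
    rw [ContinuousLinearMap.sub_apply]
    rw [hres s hs t ht z]
    calc ‖ιinv s (Pop t (ιinv t z) - Pop s (ιinv t z))‖
        ≤ c1 ^ 2 * ‖Pop t (ιinv t z) - Pop s (ιinv t z)‖ := hAop s hs _
    _ = c1 ^ 2 * ‖(Pop t - Pop s) (ιinv t z)‖ := by rw [ContinuousLinearMap.sub_apply]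
    _ ≤ c1 ^ 2 * (‖Pop t - Pop s‖ * ‖ιinv t z‖) :=
        mul_le_mul_of_nonneg_left ((Pop t - Pop s).le_opNorm _) (by positivity)
    _ ≤ c1 ^ 2 * (‖Pop t - Pop s‖ * (c1 ^ 2 * ‖z‖)) := by
        apply mul_le_mul_of_nonneg_left _ (by positivity)
        exact mul_le_mul_of_nonneg_left (hAop t ht z) (norm_nonneg _)
    _ = c1 ^ 2 * c1 ^ 2 * ‖Pop t - Pop s‖ * ‖z‖ := by ring
    _ = c1 ^ 2 * c1 ^ 2 * ‖Pop s - Pop t‖ * ‖z‖ := by rw [norm_sub_rev]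
  -- continuity of ιinv on [0, T] in operator norm
  have hA_cont : ContinuousOn ιinv (Icc (0:ℝ) T) := by
    intro t ht
    rw [ContinuousWithinAt, tendsto_iff_dist_tendsto_zero]
    have hPc : Tendsto (fun s => dist (Pop s) (Pop t)) (nhdsWithin t (Icc (0:ℝ) T))
        (nhds 0) := by
      have := ((hPop_cont t ht).tendsto).dist (tendsto_const_nhds (x := Pop t))
      simpa using this
    apply squeeze_zero' (g := fun s => c1 ^ 2 * c1 ^ 2 * dist (Pop s) (Pop t))
      (Filter.Eventually.of_forall (fun s => dist_nonneg))
    · filter_upwards [eventually_mem_nhdsWithin] with s hs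
      rw [dist_eq_norm, dist_eq_norm]
      exact hA_lip t ht s hs
    · have := hPc.const_mul (c1 ^ 2 * c1 ^ 2)
      simpa using this
  have hA_meas : AEStronglyMeasurable ιinv (volume.restrict (Icc (0:ℝ) T)) :=
    hA_cont.aestronglyMeasurable_of_isCompact isCompact_Icc measurableSet_Icc
  -- bound for Pop
  obtain ⟨MP, hMP⟩ := (isCompact_Icc.image_of_continuousOn hPop_cont).isBounded.subset_closedBall 0
  have hMP' : ∀ s ∈ Icc (0:ℝ) T, ‖Pop s‖ ≤ MP := by
    intro s hs
    have := hMP ⟨s, hs, rfl⟩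
    simpa [Metric.mem_closedBall, dist_eq_norm] using this
  have hMP0 : 0 ≤ MP := le_trans (norm_nonneg (Pop 0)) (hMP' 0 h0mem)
  -- now fix x (and t, y)
  intro t ht x y
  set v : ℝ → H := fun s => ιinv s (Φ s (ιinv s x)) with hvdef
  have hAx_meas : AEStronglyMeasurable (fun s => ιinv s x) (volume.restrict (Icc (0:ℝ) T)) :=
    happly hA_meas aestronglyMeasurable_const
  have hΦAx_meas : AEStronglyMeasurable (fun s => Φ s (ιinv s x))
      (volume.restrict (Icc (0:ℝ) T)) := happly hΦmeas hAx_meas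
  have hv_meas : AEStronglyMeasurable v (volume.restrict (Icc (0:ℝ) T)) :=
    happly hA_meas hΦAx_meas
  have hΦAx_bound : ∀ s ∈ Icc (0:ℝ) T, ‖Φ s (ιinv s x)‖ ≤ (c1 ^ 2 * ‖x‖) * ‖Φ s‖ := by
    intro s hs
    calc ‖Φ s (ιinv s x)‖ ≤ ‖Φ s‖ * ‖ιinv s x‖ := (Φ s).le_opNorm _
    _ ≤ ‖Φ s‖ * (c1 ^ 2 * ‖x‖) :=
        mul_le_mul_of_nonneg_left (hAop s hs x) (norm_nonneg _)
    _ = (c1 ^ 2 * ‖x‖) * ‖Φ s‖ := by ring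
  have hv_bound : ∀ s ∈ Icc (0:ℝ) T, ‖v s‖ ≤ (c1 ^ 2 * (c1 ^ 2 * ‖x‖)) * ‖Φ s‖ := by
    intro s hs
    calc ‖v s‖ ≤ c1 ^ 2 * ‖Φ s (ιinv s x)‖ := hAop s hs _
    _ ≤ c1 ^ 2 * ((c1 ^ 2 * ‖x‖) * ‖Φ s‖) :=
        mul_le_mul_of_nonneg_left (hΦAx_bound s hs) (by positivity)
    _ = (c1 ^ 2 * (c1 ^ 2 * ‖x‖)) * ‖Φ s‖ := by ring
  have hΦAx_int : IntegrableOn (fun s => Φ s (ιinv s x)) (Icc (0:ℝ) T) := by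
    apply aux_integrableOn_of_bound measurableSet_Icc (hΦint.const_mul _) hΦAx_meas
    intro s hs
    simpa [mul_comm] using hΦAx_bound s hs
  have hΦAx_ii : ∀ {a b : ℝ}, a ∈ Icc (0:ℝ) T → b ∈ Icc (0:ℝ) T →
      IntervalIntegrable (fun s => Φ s (ιinv s x)) volume a b := by
    intro a b ha hb; exact aux_intervalIntegrable_of_integrableOn_Icc hΦAx_int ha hb
  have hv_int : IntegrableOn v (Icc (0:ℝ) T) := by
    apply aux_integrableOn_of_bound measurableSet_Icc (hΦint.const_mul _) hv_meas
    intro s hs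
    simpa [mul_comm] using hv_bound s hs
  have hv_ii : ∀ {a b : ℝ}, a ∈ Icc (0:ℝ) T → b ∈ Icc (0:ℝ) T →
      IntervalIntegrable v volume a b := by
    intro a b ha hb; exact aux_intervalIntegrable_of_integrableOn_Icc hv_int ha hb
  set q : ℝ → H := fun r => ∫ s in (0:ℝ)..r, v s with hqdef
  have hq_cont : ContinuousOn q (Icc (0:ℝ) T) := by
    have h := intervalIntegral.continuousOn_primitive_interval (a := (0:ℝ)) (b := T)
      (μ := volume) (f := v) (by rwa [uIcc_of_le hT0])
    rwa [uIcc_of_le hT0] at h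
  set d : ℝ → H := fun r => ιinv r x - x + q r with hddef
  have hAx_cont : ContinuousOn (fun r => ιinv r x) (Icc (0:ℝ) T) := by
    have h := (isBoundedBilinearMap_apply (𝕜 := ℝ) (E := H) (F := H)).continuous.comp_continuousOn
      (hA_cont.prodMk (continuousOn_const : ContinuousOn (fun _ : ℝ => x) (Icc (0:ℝ) T)))
    exact h
  have hd_cont : ContinuousOn d (Icc (0:ℝ) T) :=
    (hAx_cont.sub continuousOn_const).add hq_cont
  have hd_meas : AEStronglyMeasurable d (volume.restrict (Icc (0:ℝ) T)) :=
    hd_cont.aestronglyMeasurable_of_isCompact isCompact_Icc measurableSet_Icc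
  obtain ⟨Md, hMd⟩ := isCompact_Icc.exists_bound_of_continuousOn hd_cont
  have hMd0 : 0 ≤ Md := le_trans (norm_nonneg (d 0)) (hMd 0 h0mem)
  obtain ⟨Mq, hMq⟩ := isCompact_Icc.exists_bound_of_continuousOn hq_cont
  have hMq0 : 0 ≤ Mq := le_trans (norm_nonneg (q 0)) (hMq 0 h0mem)
  have hΦd_meas : AEStronglyMeasurable (fun u => Φ u (d u))
      (volume.restrict (Icc (0:ℝ) T)) := happly hΦmeas hd_meas
  have hΦd_int : IntegrableOn (fun u => Φ u (d u)) (Icc (0:ℝ) T) := by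
    apply aux_integrableOn_of_bound measurableSet_Icc (hΦint.mul_const Md) hΦd_meas
    intro r hr
    exact le_trans ((Φ r).le_opNorm _)
      (mul_le_mul_of_nonneg_left (hMd r hr) (norm_nonneg _))
  have hΦd_ii : ∀ {a b : ℝ}, a ∈ Icc (0:ℝ) T → b ∈ Icc (0:ℝ) T →
      IntervalIntegrable (fun u => Φ u (d u)) volume a b := by
    intro a b ha hb; exact aux_intervalIntegrable_of_integrableOn_Icc hΦd_int ha hb
  have hΦq_meas : AEStronglyMeasurable (fun u => Φ u (q u))
      (volume.restrict (Icc (0:ℝ) T)) :=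
    happly hΦmeas (hq_cont.aestronglyMeasurable_of_isCompact isCompact_Icc measurableSet_Icc)
  have hΦq_int : IntegrableOn (fun u => Φ u (q u)) (Icc (0:ℝ) T) := by
    apply aux_integrableOn_of_bound measurableSet_Icc (hΦint.mul_const Mq) hΦq_meas
    intro r hr
    exact le_trans ((Φ r).le_opNorm _)
      (mul_le_mul_of_nonneg_left (hMq r hr) (norm_nonneg _))
  have hΦq_ii : ∀ {a b : ℝ}, a ∈ Icc (0:ℝ) T → b ∈ Icc (0:ℝ) T →
      IntervalIntegrable (fun u => Φ u (q u)) volume a b := by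
    intro a b ha hb; exact aux_intervalIntegrable_of_integrableOn_Icc hΦq_int ha hb
  -- key identity : ι r (d r) = ∫_0^r Φ u (d u)
  have key1 : ∀ r ∈ Icc (0:ℝ) T, ι r (d r) = ∫ u in (0:ℝ)..r, Φ u (d u) := by
    intro r hr
    have hrr : Icc (0:ℝ) r ⊆ Icc (0:ℝ) T := hIccT hr
    have ha : ι r (q r) = ∫ s in (0:ℝ)..r, ι r (v s) :=
      (ContinuousLinearMap.intervalIntegral_comp_comm (ι r) (hv_ii h0mem hr)).symm
    have hb : ∀ s ∈ Icc (0:ℝ) r,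
        ι r (v s) = Φ s (ιinv s x) + (Pop r (v s) - Pop s (v s)) := by
      intro s hs
      have hsmem : s ∈ Icc (0:ℝ) T := hrr hs
      have h1 : ι r (v s) = v s + Pop r (v s) := hι_eq r hr (v s)
      have h2 : ι s (v s) = v s + Pop s (v s) := hι_eq s hsmem (v s)
      have h3 : ι s (v s) = Φ s (ιinv s x) := (hιinv s hsmem).2 _
      have h4 : v s = Φ s (ιinv s x) - Pop s (v s) := by
        rw [← h3, h2]; abel
      rw [h1]
      nth_rewrite 1 [h4]
      abel
    -- integrability of the correction term
    have hPv_meas : AEStronglyMeasurable (fun s => Pop r (v s) - Pop s (v s))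
        (volume.restrict (Icc (0:ℝ) T)) := by
      have h1 : AEStronglyMeasurable (fun s : ℝ => Pop r - Pop s)
          (volume.restrict (Icc (0:ℝ) T)) :=
        (continuousOn_const.sub hPop_cont).aestronglyMeasurable_of_isCompact
          isCompact_Icc measurableSet_Icc
      have h2 := happly h1 hv_meas
      apply h2.congr
      filter_upwards with s
      rw [ContinuousLinearMap.sub_apply]
    have hPv_int : IntegrableOn (fun s => Pop r (v s) - Pop s (v s)) (Icc (0:ℝ) T) := by
      apply aux_integrableOn_of_bound measurableSet_Icc (hv_int.norm.const_mul (2 * MP))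
        hPv_meas
      intro s hs
      calc ‖Pop r (v s) - Pop s (v s)‖ ≤ ‖Pop r (v s)‖ + ‖Pop s (v s)‖ := norm_sub_le _ _
      _ ≤ MP * ‖v s‖ + MP * ‖v s‖ := by
          gcongr
          · exact le_trans ((Pop r).le_opNorm _)
              (mul_le_mul_of_nonneg_right (hMP' r hr) (norm_nonneg _))
          · exact le_trans ((Pop s).le_opNorm _)
              (mul_le_mul_of_nonneg_right (hMP' s hs) (norm_nonneg _))
      _ = 2 * MP * ‖v s‖ := by ring
    have hPv_ii : IntervalIntegrable (fun s => Pop r (v s) - Pop s (v s)) volume 0 r :=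
      aux_intervalIntegrable_of_integrableOn_Icc hPv_int h0mem hr
    have hcsplit : (∫ s in (0:ℝ)..r, ι r (v s))
        = (∫ s in (0:ℝ)..r, Φ s (ιinv s x))
          + ∫ s in (0:ℝ)..r, (Pop r (v s) - Pop s (v s)) := by
      rw [← intervalIntegral.integral_add (hΦAx_ii h0mem hr) hPv_ii]
      apply intervalIntegral.integral_congr
      intro s hs
      rw [uIcc_of_le hr.1] at hs
      exact hb s hs
    have hd1 : ∀ s ∈ Icc (0:ℝ) r,
        Pop r (v s) - Pop s (v s) = ∫ u in s..r, Φ u (v s) := by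
      intro s hs
      have hsmem : s ∈ Icc (0:ℝ) T := hrr hs
      rw [hPop_apply r hr, hPop_apply s hsmem]
      exact intervalIntegral.integral_interval_sub_left (hvec_ii (v s) h0mem hr)
        (hvec_ii (v s) h0mem hsmem)
    have htri : (∫ s in (0:ℝ)..r, (Pop r (v s) - Pop s (v s)))
        = ∫ u in (0:ℝ)..r, Φ u (q u) := by
      have h1 : (∫ s in (0:ℝ)..r, (Pop r (v s) - Pop s (v s)))
          = ∫ s in (0:ℝ)..r, ∫ u in s..r, Φ u (v s) := by
        apply intervalIntegral.integral_congr
        intro s hs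
        rw [uIcc_of_le hr.1] at hs
        exact hd1 s hs
      rw [h1]
      have hsub : Ioc (0:ℝ) r ⊆ Icc (0:ℝ) T := fun u hu => ⟨hu.1.le, le_trans hu.2 hr.2⟩
      have hmono : volume.restrict (Ioc (0:ℝ) r) ≤ volume.restrict (Icc (0:ℝ) T) :=
        Measure.restrict_mono hsub le_rfl
      have hΦm' : AEStronglyMeasurable Φ (volume.restrict (Ioc (0:ℝ) r)) :=
        hΦmeas.mono_measure hmono
      have hvm' : AEStronglyMeasurable v (volume.restrict (Ioc (0:ℝ) r)) :=
        hv_meas.mono_measure hmono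
      have hmeasp : AEStronglyMeasurable (fun p : ℝ × ℝ => Φ p.1 (v p.2))
          ((volume.restrict (Ioc (0:ℝ) r)).prod (volume.restrict (Ioc (0:ℝ) r))) := by
        have hf1 : AEStronglyMeasurable (fun p : ℝ × ℝ => Φ p.1)
            ((volume.restrict (Ioc (0:ℝ) r)).prod (volume.restrict (Ioc (0:ℝ) r))) := hΦm'.comp_fst
        have hf2 : AEStronglyMeasurable (fun p : ℝ × ℝ => v p.2)
            ((volume.restrict (Ioc (0:ℝ) r)).prod (volume.restrict (Ioc (0:ℝ) r))) := hvm'.comp_snd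
        exact (isBoundedBilinearMap_apply (𝕜 := ℝ) (E := H) (F := H)).continuous.comp_aestronglyMeasurable
          (hf1.prodMk hf2)
      have hintp : Integrable (fun p : ℝ × ℝ => Φ p.1 (v p.2))
          ((volume.restrict (Ioc (0:ℝ) r)).prod (volume.restrict (Ioc (0:ℝ) r))) := by
        apply Integrable.mono
          (Integrable.mul_prod (hΦint.mono_set hsub) ((hv_int.mono_set hsub).norm))
          hmeasp
        filter_upwards with p
        calc ‖Φ p.1 (v p.2)‖ ≤ ‖Φ p.1‖ * ‖v p.2‖ := (Φ p.1).le_opNorm _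
        _ ≤ ‖‖Φ p.1‖ * ‖v p.2‖‖ := le_abs_self _
      rw [triangle_swap hr.1 (fun u s => Φ u (v s)) hintp]
      apply intervalIntegral.integral_congr
      intro u hu
      rw [uIcc_of_le hr.1] at hu
      have humem : u ∈ Icc (0:ℝ) T := hrr hu
      exact ContinuousLinearMap.intervalIntegral_comp_comm (Φ u) (hv_ii h0mem humem)
    have hqr : ι r (q r) = (∫ u in (0:ℝ)..r, Φ u (d u)) + Pop r x := by
      rw [ha, hcsplit, htri]
      rw [hPop_apply r hr x]
      rw [← intervalIntegral.integral_add (hΦAx_ii h0mem hr) (hΦq_ii h0mem hr)]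
      rw [← intervalIntegral.integral_add (hΦd_ii h0mem hr) (hvec_ii x h0mem hr)]
      apply intervalIntegral.integral_congr
      intro u hu
      rw [uIcc_of_le hr.1] at hu
      simp only
      rw [← map_add, ← map_add]
      congr 1
      show ιinv u x + q u = d u + x
      show ιinv u x + q u = (ιinv u x - x + q u) + x
      abel
    calc ι r (d r) = ι r (ιinv r x) - ι r x + ι r (q r) := by
          show ι r (ιinv r x - x + q r) = _
          rw [map_add, map_sub]
    _ = x - (x + Pop r x) + ((∫ u in (0:ℝ)..r, Φ u (d u)) + Pop r x) := by
        rw [(hιinv r hr).2 x, hι_eq r hr x, hqr]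
    _ = ∫ u in (0:ℝ)..r, Φ u (d u) := by abel
  -- Gronwall bound
  have hΦnd_int : IntegrableOn (fun u => ‖Φ u‖ * ‖d u‖) (Icc (0:ℝ) T) := by
    apply aux_integrableOn_of_bound measurableSet_Icc (hΦint.mul_const Md)
      (hΦint.aestronglyMeasurable.mul hd_meas.norm)
    intro r hr
    show ‖(‖Φ r‖ * ‖d r‖)‖ ≤ ‖Φ r‖ * Md
    have h1 : ‖(‖Φ r‖ * ‖d r‖)‖ = ‖Φ r‖ * ‖d r‖ := by
      rw [Real.norm_eq_abs, abs_of_nonneg (mul_nonneg (norm_nonneg _) (norm_nonneg _))]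
    rw [h1]
    exact mul_le_mul_of_nonneg_left (hMd r hr) (norm_nonneg _)
  have hbound : ∀ r ∈ Icc (0:ℝ) T, ‖d r‖ ≤ c1 ^ 2 * ∫ u in (0:ℝ)..r, ‖Φ u‖ * ‖d u‖ := by
    intro r hr
    have hd_eq : d r = ιinv r (∫ u in (0:ℝ)..r, Φ u (d u)) := by
      rw [← key1 r hr, (hιinv r hr).1]
    rw [hd_eq]
    calc ‖ιinv r (∫ u in (0:ℝ)..r, Φ u (d u))‖
        ≤ c1 ^ 2 * ‖∫ u in (0:ℝ)..r, Φ u (d u)‖ := hAop r hr _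
    _ ≤ c1 ^ 2 * ∫ u in (0:ℝ)..r, ‖Φ u (d u)‖ :=
        mul_le_mul_of_nonneg_left (intervalIntegral.norm_integral_le_integral_norm hr.1)
          (by positivity)
    _ ≤ c1 ^ 2 * ∫ u in (0:ℝ)..r, ‖Φ u‖ * ‖d u‖ := by
        apply mul_le_mul_of_nonneg_left _ (by positivity)
        apply intervalIntegral.integral_mono_on hr.1 (hΦd_ii h0mem hr).norm
          (aux_intervalIntegrable_of_integrableOn_Icc hΦnd_int h0mem hr)
        intro u _
        exact (Φ u).le_opNorm _
  have hzero := gronwall_zero (fun r => ‖d r‖) (fun u => ‖Φ u‖) (c1 ^ 2) (by positivity)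
    hd_cont.norm (fun r _ => norm_nonneg _) (fun s _ => norm_nonneg _) hΦint hbound
  -- conclude
  have hd0 : d t = 0 := norm_eq_zero.mp (hzero t ht)
  have hAx : ιinv t x = x - q t := by
    have h := hd0
    show ιinv t x = x - q t
    have h' : ιinv t x - x + q t = 0 := h
    rw [← sub_eq_zero]
    calc ιinv t x - (x - q t) = ιinv t x - x + q t := by abel
    _ = 0 := h'
  rw [hAx, inner_sub_left]
  congr 1
  have hcc := ContinuousLinearMap.intervalIntegral_comp_comm (innerSL ℝ y) (hv_ii h0mem ht)
  simp only [innerSL_apply_apply] at hcc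
  calc ⟪q t, y⟫ = ⟪y, q t⟫ := real_inner_comm _ _
  _ = ∫ s in (0:ℝ)..t, ⟪y, v s⟫ := by
      show ⟪y, ∫ s in (0:ℝ)..t, v s⟫ = _
      rw [← hcc]
  _ = ∫ s in (0:ℝ)..t, ⟪v s, y⟫ := by
      apply intervalIntegral.integral_congr
      intro s _
      exact real_inner_comm _ _
end

section
/- Let Y ∈ L¹([0,T]; H) (Bochner integrable) and let X : [0,T] → H satisfy X_t = X_0 + ∫_0^t Y_s ds for all t ∈ [0,T]. Then for every t ∈ [0,T]: ι_t^* X_t = X_0 + ∫_0^t ι_s^* Y_s ds + ∫_0^t Φ(s) X_s ds. -/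
open MeasureTheory Set
open scoped RealInnerProductSpace

/-- If `X_t = X_0 + ∫_0^t Y_s ds` with `Y ∈ L¹([0,T];H)`, then
`ι_t^* X_t = X_0 + ∫_0^t ι_s^* Y_s ds + ∫_0^t Φ(s) X_s ds` for all `t ∈ [0,T]`. -/
theorem iota_of_absolutely_continuous_path
    {H : Type*} [NormedAddCommGroup H] [InnerProductSpace ℝ H] [CompleteSpace H]
    (T : ℝ) (hT : 0 < T)
    (ip : ℝ → H → H → ℝ)
    (hsymm : ∀ t ∈ Icc (0:ℝ) T, ∀ x y : H, ip t x y = ip t y x)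
    (hadd : ∀ t ∈ Icc (0:ℝ) T, ∀ x x' y : H, ip t (x + x') y = ip t x y + ip t x' y)
    (hsmul : ∀ t ∈ Icc (0:ℝ) T, ∀ (c : ℝ) (x y : H), ip t (c • x) y = c * ip t x y)
    (hip0 : ∀ x y : H, ip 0 x y = ⟪x, y⟫)
    (c1 : ℝ) (hc1 : 1 ≤ c1)
    (hC1 : ∀ t ∈ Icc (0:ℝ) T, ∀ x : H,
      c1⁻¹ * ‖x‖ ≤ Real.sqrt (ip t x x) ∧ Real.sqrt (ip t x x) ≤ c1 * ‖x‖)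
    (Φ : ℝ → H →L[ℝ] H)
    (hΦsa : ∀ t ∈ Icc (0:ℝ) T, ∀ x y : H, ⟪Φ t x, y⟫ = ⟪x, Φ t y⟫)
    (hΦmeas : AEStronglyMeasurable (fun t => Φ t) (volume.restrict (Icc (0:ℝ) T)))
    (hΦint : IntegrableOn (fun t => ‖Φ t‖) (Icc (0:ℝ) T))
    (hC2 : ∀ t ∈ Icc (0:ℝ) T, ∀ x : H, ip t x x - ⟪x, x⟫ = ∫ s in (0:ℝ)..t, ⟪x, Φ s x⟫)
    (ι : ℝ → H →L[ℝ] H)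
    (hι : ∀ t ∈ Icc (0:ℝ) T, ∀ x y : H, ⟪ι t x, y⟫ = ip t x y)
    (Y : ℝ → H) (hY : IntegrableOn Y (Icc (0:ℝ) T))
    (X : ℝ → H) (hX : ∀ t ∈ Icc (0:ℝ) T, X t = X 0 + ∫ s in (0:ℝ)..t, Y s)
    :
    ∀ t ∈ Icc (0:ℝ) T,
      ι t (X t) = X 0 + (∫ s in (0:ℝ)..t, ι s (Y s)) + ∫ s in (0:ℝ)..t, Φ s (X s) := by
  intro t ht
  obtain ⟨ht0, htT⟩ := ht
  have htIcc : t ∈ Icc (0:ℝ) T := ⟨ht0, htT⟩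
  have hsubT : ∀ {s : ℝ}, s ∈ Icc (0:ℝ) T → Ioc (0:ℝ) s ⊆ Icc (0:ℝ) T := fun hs =>
    Ioc_subset_Icc_self.trans (Icc_subset_Icc le_rfl hs.2)
  -- measurability of Φ on subsets
  have hΦm : ∀ {A : Set ℝ}, A ⊆ Icc (0:ℝ) T →
      AEStronglyMeasurable (fun r => Φ r) (volume.restrict A) :=
    fun hA => hΦmeas.mono_measure (Measure.restrict_mono hA le_rfl)
  -- integrability of r ↦ Φ r x
  have hΦx : ∀ {A : Set ℝ}, A ⊆ Icc (0:ℝ) T → ∀ x : H,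
      IntegrableOn (fun r => Φ r x) A := by
    intro A hA x
    refine Integrable.mono' ((hΦint.mono_set hA).mul_const ‖x‖) ?_ ?_
    · exact isBoundedBilinearMap_apply.continuous.comp_aestronglyMeasurable
        ((hΦm hA).prodMk aestronglyMeasurable_const)
    · exact Filter.Eventually.of_forall fun r => (Φ r).le_opNorm x
  -- scalar integrability
  have hsc : ∀ {A : Set ℝ}, A ⊆ Icc (0:ℝ) T → ∀ x y : H,
      IntegrableOn (fun r => ⟪x, Φ r y⟫) A := by
    intro A hA x y
    have := (innerSL ℝ x).integrable_comp (hΦx hA y)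
    simpa [IntegrableOn] using this
  -- Step A : bilinear version of hC2
  have hA2 : ∀ s ∈ Icc (0:ℝ) T, ∀ x y : H,
      ip s x y = ⟪x, y⟫ + ∫ r in Ioc (0:ℝ) s, ⟪x, Φ r y⟫ := by
    intro s hs x y
    have hsub := hsubT hs
    have h1 := hC2 s hs (x + y)
    have h2 := hC2 s hs x
    have h3 := hC2 s hs y
    rw [intervalIntegral.integral_of_le hs.1] at h1 h2 h3
    have hxx := hsc hsub x x
    have hxy := hsc hsub x y
    have hyy := hsc hsub y y
    have hiexp : ∫ r in Ioc (0:ℝ) s, ⟪x + y, Φ r (x + y)⟫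
        = (∫ r in Ioc (0:ℝ) s, ⟪x, Φ r x⟫) + 2 * (∫ r in Ioc (0:ℝ) s, ⟪x, Φ r y⟫)
          + ∫ r in Ioc (0:ℝ) s, ⟪y, Φ r y⟫ := by
      have hpt : EqOn (fun r => ⟪x + y, Φ r (x + y)⟫)
          (fun r => ⟪x, Φ r x⟫ + 2 * ⟪x, Φ r y⟫ + ⟪y, Φ r y⟫) (Ioc (0:ℝ) s) := by
        intro r hr
        have hrT := hsub hr
        have e1 : ⟪y, Φ r x⟫ = ⟪x, Φ r y⟫ :=
          (real_inner_comm (Φ r x) y).trans (hΦsa r hrT x y)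
        simp only [map_add, inner_add_left, inner_add_right]
        linarith
      rw [setIntegral_congr_fun measurableSet_Ioc hpt,
        integral_add (f := fun r => ⟪x, Φ r x⟫ + 2 * ⟪x, Φ r y⟫)
          (g := fun r => ⟪y, Φ r y⟫) (hxx.add (hxy.const_mul 2)) hyy,
        integral_add (f := fun r => ⟪x, Φ r x⟫) (g := fun r => 2 * ⟪x, Φ r y⟫)
          hxx (hxy.const_mul 2),
        integral_const_mul]
    have hlhs : ip s (x + y) (x + y) = ip s x x + 2 * ip s x y + ip s y y := by
      rw [hadd s hs x y (x + y), hsymm s hs x (x + y), hadd s hs x y x,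
        hsymm s hs y (x + y), hadd s hs x y y, hsymm s hs y x]
      ring
    have hpol := real_inner_add_add_self x y
    rw [hlhs, hpol, hiexp] at h1
    linarith
  -- Step B : ι s x = x + ∫ Φ r x
  have hB : ∀ s ∈ Icc (0:ℝ) T, ∀ x : H,
      ι s x = x + ∫ r in Ioc (0:ℝ) s, Φ r x := by
    intro s hs x
    apply ext_inner_right ℝ
    intro y
    rw [hι s hs, hA2 s hs, inner_add_left]
    congr 1
    rw [real_inner_comm, ← integral_inner (hΦx (hsubT hs) x) y]
    refine setIntegral_congr_fun measurableSet_Ioc fun r hr => ?_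
    have hrT := hsubT hs hr
    rw [← hΦsa r hrT x y, real_inner_comm]
  -- set-up for Fubini
  have hsubt : Ioc (0:ℝ) t ⊆ Icc (0:ℝ) T := hsubT htIcc
  have hYt : IntegrableOn Y (Ioc (0:ℝ) t) := hY.mono_set hsubt
  have hXdiff : ∀ r ∈ Ioc (0:ℝ) t, (∫ s in Ioc r t, Y s) = X t - X r := by
    intro r hr
    have hrIcc : r ∈ Icc (0:ℝ) T := hsubt hr
    have h01 : IntervalIntegrable Y volume 0 t :=
      (hY.mono_set (by rw [uIcc_of_le ht0]; exact Icc_subset_Icc le_rfl htT)).intervalIntegrable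
    have h02 : IntervalIntegrable Y volume 0 r :=
      (hY.mono_set (by rw [uIcc_of_le hr.1.le]; exact Icc_subset_Icc le_rfl hrIcc.2)).intervalIntegrable
    have hd : X t - X r = ∫ s in r..t, Y s := by
      rw [hX t htIcc, hX r hrIcc, ← intervalIntegral.integral_interval_sub_left h01 h02]
      abel
    rw [hd]
    exact (intervalIntegral.integral_of_le hr.2).symm
  set μt := volume.restrict (Ioc (0:ℝ) t) with hμt
  set F : ℝ → ℝ → H := fun s r => if r ≤ s then Φ r (Y s) else 0 with hF
  have hFmeas : AEStronglyMeasurable (Function.uncurry F) (μt.prod μt) := by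
    have h1 : AEStronglyMeasurable (fun p : ℝ × ℝ => Φ p.2 (Y p.1)) (μt.prod μt) :=
      isBoundedBilinearMap_apply.continuous.comp_aestronglyMeasurable
        (((hΦm hsubt).comp_snd).prodMk (hYt.aestronglyMeasurable.comp_fst))
    have h2 : Function.uncurry F =
        ({q : ℝ × ℝ | q.2 ≤ q.1}).indicator (fun p : ℝ × ℝ => Φ p.2 (Y p.1)) := by
      funext p
      simp only [Function.uncurry, hF, indicator_apply, mem_setOf_eq]
    rw [h2]
    exact h1.indicator (measurableSet_le measurable_snd measurable_fst)
  have hFint : Integrable (Function.uncurry F) (μt.prod μt) := by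
    refine Integrable.mono' (Integrable.mul_prod hYt.norm (hΦint.mono_set hsubt)) hFmeas ?_
    refine Filter.Eventually.of_forall fun p => ?_
    by_cases h : p.2 ≤ p.1
    · simp only [Function.uncurry, hF, if_pos h]
      calc ‖Φ p.2 (Y p.1)‖ ≤ ‖Φ p.2‖ * ‖Y p.1‖ := (Φ p.2).le_opNorm _
        _ = ‖Y p.1‖ * ‖Φ p.2‖ := mul_comm _ _
    · simp only [Function.uncurry, hF, if_neg h, norm_zero]
      positivity
  have hswap : (∫ s, (∫ r, F s r ∂μt) ∂μt) = ∫ r, (∫ s, F s r ∂μt) ∂μt :=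
    integral_integral_swap hFint
  have hleft : ∀ s ∈ Ioc (0:ℝ) t, (∫ r, F s r ∂μt) = ∫ r in Ioc (0:ℝ) s, Φ r (Y s) := by
    intro s hs
    have h1 : (fun r => F s r) = (Iic s).indicator (fun r => Φ r (Y s)) := by
      funext r
      simp only [hF, indicator_apply, mem_Iic]
    rw [hμt, h1, setIntegral_indicator measurableSet_Iic, Ioc_inter_Iic,
      min_eq_right hs.2]
  have hright : ∀ r ∈ Ioc (0:ℝ) t, (∫ s, F s r ∂μt) = Φ r (X t) - Φ r (X r) := by
    intro r hr
    have h1 : (fun s => F s r) = (Ici r).indicator (fun s => Φ r (Y s)) := by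
      funext s
      simp only [hF, indicator_apply, mem_Ici]
    have hset : Ioc (0:ℝ) t ∩ Ici r = Icc r t := by
      ext u
      simp only [mem_inter_iff, mem_Ioc, mem_Ici, mem_Icc]
      constructor
      · rintro ⟨⟨_, h2⟩, h3⟩; exact ⟨h3, h2⟩
      · rintro ⟨h1', h2⟩; exact ⟨⟨lt_of_lt_of_le hr.1 h1', h2⟩, h1'⟩
    have hYrt : IntegrableOn Y (Ioc r t) :=
      hY.mono_set (Ioc_subset_Icc_self.trans (Icc_subset_Icc hr.1.le htT))
    rw [hμt, h1, setIntegral_indicator measurableSet_Ici, hset,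
      integral_Icc_eq_integral_Ioc, (Φ r).integral_comp_comm hYrt, hXdiff r hr, map_sub]
  have hgint : Integrable (fun s => ∫ r, F s r ∂μt) μt := hFint.integral_prod_left
  have hhint : Integrable (fun r => ∫ s, F s r ∂μt) μt := hFint.swap.integral_prod_left
  have hh2 : Integrable (fun r => Φ r (X t) - Φ r (X r)) μt := by
    refine hhint.congr ?_
    rw [hμt]
    exact (ae_restrict_iff' measurableSet_Ioc).2
      (Filter.Eventually.of_forall fun r hr => hright r hr)
  have hXrint : Integrable (fun r => Φ r (X r)) μt := by
    have := (hΦx hsubt (X t)).sub hh2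
    refine this.congr (Filter.Eventually.of_forall fun r => ?_)
    simp only [Pi.sub_apply]
    abel
  -- assemble
  rw [intervalIntegral.integral_of_le ht0, intervalIntegral.integral_of_le ht0]
  have e1 : (∫ s in Ioc (0:ℝ) t, ι s (Y s))
      = (∫ s in Ioc (0:ℝ) t, Y s) + ∫ s in Ioc (0:ℝ) t, (∫ r, F s r ∂μt) := by
    rw [← integral_add hYt hgint]
    refine setIntegral_congr_fun measurableSet_Ioc fun s hs => ?_
    rw [hB s (hsubt hs) (Y s), hleft s hs]
  have e2 : (∫ s in Ioc (0:ℝ) t, (∫ r, F s r ∂μt))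
      = (∫ r in Ioc (0:ℝ) t, Φ r (X t)) - ∫ r in Ioc (0:ℝ) t, Φ r (X r) := by
    rw [show (∫ s in Ioc (0:ℝ) t, (∫ r, F s r ∂μt)) = ∫ r, (∫ s, F s r ∂μt) ∂μt from hswap,
      ← integral_sub (hΦx hsubt (X t)) hXrint]
    exact setIntegral_congr_fun measurableSet_Ioc fun r hr => hright r hr
  have eY : (∫ s in Ioc (0:ℝ) t, Y s) = X t - X 0 := by
    rw [hX t htIcc, intervalIntegral.integral_of_le ht0]
    abel
  rw [hB t htIcc (X t), e1, e2, eY]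
  abel
end

section
/- Let Y ∈ L¹([0,T]; H) (Bochner integrable) and let X : [0,T] → H satisfy X_t = X_0 + ∫_0^t Y_s ds for all t ∈ [0,T]. Then the time-dependent squared norm of X satisfies, for every t ∈ [0,T]: |X_t|_t² = |X_0|² + ∫_0^t [ 2 (ι_s^* Y_s, X_s) + (X_s, Φ(s) X_s) ] ds. (This is the deterministic case, Z = 0, of the paper's Itô formula for time-dependent norms.) -/
set_option maxHeartbeats 1000000
set_option synthInstance.maxHeartbeats 200000

open MeasureTheory Set
open scoped RealInnerProductSpace

namespace ItoAux

lemma ae_prod_mem {s : Set ℝ} (hs : MeasurableSet s) :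
    ∀ᵐ p : ℝ × ℝ ∂((volume.restrict s).prod (volume.restrict s)),
      p.1 ∈ s ∧ p.2 ∈ s := by
  set ν := volume.restrict s
  have hν : ν sᶜ = 0 := by
    rw [Measure.restrict_apply hs.compl]
    simp
  have h1 : ∀ᵐ p : ℝ × ℝ ∂(ν.prod ν), p.1 ∈ s := by
    rw [ae_iff]
    refine measure_mono_null (fun p hp => ?_) (?_ : ν.prod ν (sᶜ ×ˢ (univ : Set ℝ)) = 0)
    · simp only [mem_setOf_eq] at hp
      exact ⟨hp, trivial⟩
    · rw [Measure.prod_prod, hν, zero_mul]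
  have h2 : ∀ᵐ p : ℝ × ℝ ∂(ν.prod ν), p.2 ∈ s := by
    rw [ae_iff]
    refine measure_mono_null (fun p hp => ?_) (?_ : ν.prod ν ((univ : Set ℝ) ×ˢ sᶜ) = 0)
    · simp only [mem_setOf_eq] at hp
      exact ⟨trivial, hp⟩
    · rw [Measure.prod_prod, hν, mul_zero]
  exact h1.and h2

lemma prodInt {μ ν : Measure ℝ} [SFinite μ] [SFinite ν] {p q : ℝ → ℝ}
    (hp : Integrable p μ) (hq : Integrable q ν) {K : ℝ × ℝ → ℝ}
    (hK : AEStronglyMeasurable K (μ.prod ν))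
    (hbd : ∀ᵐ z ∂(μ.prod ν), |K z| ≤ p z.1 * q z.2) : Integrable K (μ.prod ν) := by
  refine Integrable.mono' (hp.mul_prod hq) hK ?_
  filter_upwards [hbd] with z hz
  simpa [Real.norm_eq_abs] using hz

lemma trunc_left (a b : ℝ) (F : ℝ → ℝ → ℝ) {s : ℝ} (hs : s ∈ Ioc a b) :
    (∫ r in Ioc a b, ({p : ℝ × ℝ | p.2 ≤ p.1}.indicator (fun p => F p.1 p.2)) (s, r))
      = ∫ r in Ioc a s, F s r := by
  have h1 : (fun r => ({p : ℝ × ℝ | p.2 ≤ p.1}.indicator (fun p => F p.1 p.2)) (s, r))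
      = (Iic s).indicator (fun r => F s r) := by
    funext r
    by_cases h : r ≤ s <;> simp [Set.indicator_apply, Set.mem_setOf_eq, Set.mem_Iic, h]
  rw [h1, integral_indicator measurableSet_Iic,
    Measure.restrict_restrict measurableSet_Iic]
  have h2 : Iic s ∩ Ioc a b = Ioc a s := by
    rw [Set.inter_comm, Set.Ioc_inter_Iic, min_eq_right hs.2]
  rw [h2]

lemma trunc_right (a b : ℝ) (F : ℝ → ℝ → ℝ) {r : ℝ} (hr : r ∈ Ioc a b) :
    (∫ s in Ioc a b, ({p : ℝ × ℝ | p.2 ≤ p.1}.indicator (fun p => F p.1 p.2)) (s, r))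
      = ∫ s in Ioc r b, F s r := by
  have h1 : (fun s => ({p : ℝ × ℝ | p.2 ≤ p.1}.indicator (fun p => F p.1 p.2)) (s, r))
      = (Ici r).indicator (fun s => F s r) := by
    funext s
    by_cases h : r ≤ s <;> simp [Set.indicator_apply, Set.mem_setOf_eq, Set.mem_Ici, h]
  rw [h1, integral_indicator measurableSet_Ici,
    Measure.restrict_restrict measurableSet_Ici]
  have h2 : Ici r ∩ Ioc a b = Icc r b := by
    ext x
    simp only [mem_inter_iff, mem_Ici, mem_Ioc, mem_Icc]
    constructor
    · rintro ⟨h1, _, h3⟩; exact ⟨h1, h3⟩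
    · rintro ⟨h1, h3⟩; exact ⟨h1, lt_of_lt_of_le hr.1 h1, h3⟩
  rw [h2, integral_Icc_eq_integral_Ioc]

lemma trunc_lt (a b : ℝ) (F : ℝ → ℝ → ℝ) {s : ℝ} (hs : s ∈ Ioc a b) :
    (∫ r in Ioc a b, ({p : ℝ × ℝ | p.1 < p.2}.indicator (fun p => F p.1 p.2)) (s, r))
      = ∫ r in Ioc s b, F s r := by
  have h1 : (fun r => ({p : ℝ × ℝ | p.1 < p.2}.indicator (fun p => F p.1 p.2)) (s, r))
      = (Ioi s).indicator (fun r => F s r) := by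
    funext r
    by_cases h : s < r <;> simp [Set.indicator_apply, Set.mem_setOf_eq, Set.mem_Ioi, h]
  rw [h1, integral_indicator measurableSet_Ioi,
    Measure.restrict_restrict measurableSet_Ioi]
  have h2 : Ioi s ∩ Ioc a b = Ioc s b := by
    ext x
    simp only [mem_inter_iff, mem_Ioi, mem_Ioc]
    constructor
    · rintro ⟨h1, _, h3⟩; exact ⟨h1, h3⟩
    · rintro ⟨h1, h3⟩; exact ⟨h1, lt_trans hs.1 h1, h3⟩
  rw [h2]

lemma trunc_lt_snd (a b : ℝ) (F : ℝ → ℝ → ℝ) {r : ℝ} (hr : r ∈ Ioc a b) :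
    (∫ s in Ioc a b, ({p : ℝ × ℝ | p.1 < p.2}.indicator (fun p => F p.1 p.2)) (s, r))
      = ∫ s in Ioc a r, F s r := by
  have h1 : (fun s => ({p : ℝ × ℝ | p.1 < p.2}.indicator (fun p => F p.1 p.2)) (s, r))
      = (Iio r).indicator (fun s => F s r) := by
    funext s
    by_cases h : s < r <;> simp [Set.indicator_apply, Set.mem_setOf_eq, Set.mem_Iio, h]
  rw [h1, integral_indicator measurableSet_Iio,
    Measure.restrict_restrict measurableSet_Iio]
  have h2 : Iio r ∩ Ioc a b = Ioo a r := by
    ext x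
    simp only [mem_inter_iff, mem_Iio, mem_Ioc, mem_Ioo]
    constructor
    · rintro ⟨h1, h2, _⟩; exact ⟨h2, h1⟩
    · rintro ⟨h1, h3⟩; exact ⟨h3, h1, le_trans h3.le hr.2⟩
  rw [h2, ← integral_Ioc_eq_integral_Ioo]

/-- Triangle swap for iterated integrals over `Ioc a b`. -/
lemma tri (a b : ℝ) (F : ℝ → ℝ → ℝ)
    (hF : Integrable (fun p : ℝ × ℝ => F p.1 p.2)
      ((volume.restrict (Ioc a b)).prod (volume.restrict (Ioc a b)))) :
    (∫ s in Ioc a b, ∫ r in Ioc a s, F s r)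
      = ∫ r in Ioc a b, ∫ s in Ioc r b, F s r := by
  have hmeas : MeasurableSet {p : ℝ × ℝ | p.2 ≤ p.1} :=
    measurableSet_le measurable_snd measurable_fst
  have hG : Integrable ({p : ℝ × ℝ | p.2 ≤ p.1}.indicator (fun p => F p.1 p.2))
      ((volume.restrict (Ioc a b)).prod (volume.restrict (Ioc a b))) :=
    hF.indicator hmeas
  calc (∫ s in Ioc a b, ∫ r in Ioc a s, F s r)
      = ∫ s in Ioc a b, ∫ r in Ioc a b,
          ({p : ℝ × ℝ | p.2 ≤ p.1}.indicator (fun p => F p.1 p.2)) (s, r) :=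
        by
          refine (setIntegral_congr_fun measurableSet_Ioc (fun s hs => ?_)).symm
          exact trunc_left a b F hs
    _ = ∫ r in Ioc a b, ∫ s in Ioc a b,
          ({p : ℝ × ℝ | p.2 ≤ p.1}.indicator (fun p => F p.1 p.2)) (s, r) :=
        integral_integral_swap hG
    _ = ∫ r in Ioc a b, ∫ s in Ioc r b, F s r :=
        setIntegral_congr_fun measurableSet_Ioc (fun r hr => trunc_right a b F hr)

/-- Symmetric square lemma. -/
lemma sq (a b : ℝ) (F : ℝ → ℝ → ℝ) (hF1 : ∀ s r, F s r = F r s)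
    (hF : Integrable (fun p : ℝ × ℝ => F p.1 p.2)
      ((volume.restrict (Ioc a b)).prod (volume.restrict (Ioc a b)))) :
    (∫ s in Ioc a b, ∫ r in Ioc a b, F s r)
      = 2 * ∫ s in Ioc a b, ∫ r in Ioc a s, F s r := by
  set ν := volume.restrict (Ioc a b) with hν
  have hmle : MeasurableSet {p : ℝ × ℝ | p.2 ≤ p.1} :=
    measurableSet_le measurable_snd measurable_fst
  have hmlt : MeasurableSet {p : ℝ × ℝ | p.1 < p.2} :=
    measurableSet_lt measurable_fst measurable_snd
  have hGle : Integrable ({p : ℝ × ℝ | p.2 ≤ p.1}.indicator (fun p => F p.1 p.2)) (ν.prod ν) :=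
    hF.indicator hmle
  have hGlt : Integrable ({p : ℝ × ℝ | p.1 < p.2}.indicator (fun p => F p.1 p.2)) (ν.prod ν) :=
    hF.indicator hmlt
  have hsum : ∀ p : ℝ × ℝ,
      F p.1 p.2 = ({p : ℝ × ℝ | p.2 ≤ p.1}.indicator (fun p => F p.1 p.2)) p
        + ({p : ℝ × ℝ | p.1 < p.2}.indicator (fun p => F p.1 p.2)) p := by
    intro p
    rcases le_or_gt p.2 p.1 with h | h
    · simp [Set.indicator_apply, Set.mem_setOf_eq, h, not_lt.2 h]
    · simp [Set.indicator_apply, Set.mem_setOf_eq, h, not_le.2 h]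
  have hIle : Integrable
      (fun s => ∫ r, ({p : ℝ × ℝ | p.2 ≤ p.1}.indicator (fun p => F p.1 p.2)) (s, r) ∂ν) ν :=
    hGle.integral_prod_left
  have hIlt : Integrable
      (fun s => ∫ r, ({p : ℝ × ℝ | p.1 < p.2}.indicator (fun p => F p.1 p.2)) (s, r) ∂ν) ν :=
    hGlt.integral_prod_left
  have step1 : (∫ s in Ioc a b, ∫ r in Ioc a b, F s r)
      = (∫ s in Ioc a b, ∫ r in Ioc a b,
          ({p : ℝ × ℝ | p.2 ≤ p.1}.indicator (fun p => F p.1 p.2)) (s, r))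
        + ∫ s in Ioc a b, ∫ r in Ioc a b,
          ({p : ℝ × ℝ | p.1 < p.2}.indicator (fun p => F p.1 p.2)) (s, r) := by
    rw [← integral_add hIle hIlt]
    apply integral_congr_ae
    filter_upwards [hF.prod_right_ae] with s hsI
    have e1 : (fun r => ({p : ℝ × ℝ | p.2 ≤ p.1}.indicator (fun p => F p.1 p.2)) (s, r))
        = (Iic s).indicator (fun r => F s r) := by
      funext r; simp [Set.indicator_apply, Set.mem_Iic]
    have e2 : (fun r => ({p : ℝ × ℝ | p.1 < p.2}.indicator (fun p => F p.1 p.2)) (s, r))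
        = (Ioi s).indicator (fun r => F s r) := by
      funext r; simp [Set.indicator_apply, Set.mem_Ioi]
    have hi1 : Integrable ((Iic s).indicator (fun r => F s r)) ν :=
      hsI.indicator measurableSet_Iic
    have hi2 : Integrable ((Ioi s).indicator (fun r => F s r)) ν :=
      hsI.indicator measurableSet_Ioi
    rw [e1, e2, ← integral_add hi1 hi2]
    apply integral_congr_ae
    filter_upwards with r
    rcases le_or_gt r s with h | h
    · simp [Set.indicator_apply, Set.mem_Iic, Set.mem_Ioi, h, not_lt.2 h]
    · simp [Set.indicator_apply, Set.mem_Iic, Set.mem_Ioi, h, not_le.2 h]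
  have step2 : (∫ s in Ioc a b, ∫ r in Ioc a b,
      ({p : ℝ × ℝ | p.2 ≤ p.1}.indicator (fun p => F p.1 p.2)) (s, r))
      = ∫ s in Ioc a b, ∫ r in Ioc a s, F s r :=
    setIntegral_congr_fun measurableSet_Ioc (fun s hs => trunc_left a b F hs)
  have step3 : (∫ s in Ioc a b, ∫ r in Ioc a b,
      ({p : ℝ × ℝ | p.1 < p.2}.indicator (fun p => F p.1 p.2)) (s, r))
      = ∫ s in Ioc a b, ∫ r in Ioc a s, F s r := by
    have hswap : (∫ s in Ioc a b, ∫ r in Ioc a b,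
        ({p : ℝ × ℝ | p.1 < p.2}.indicator (fun p => F p.1 p.2)) (s, r))
        = ∫ r in Ioc a b, ∫ s in Ioc a b,
          ({p : ℝ × ℝ | p.1 < p.2}.indicator (fun p => F p.1 p.2)) (s, r) :=
      integral_integral_swap hGlt
    rw [hswap]
    calc (∫ r in Ioc a b, ∫ s in Ioc a b,
        ({p : ℝ × ℝ | p.1 < p.2}.indicator (fun p => F p.1 p.2)) (s, r))
        = ∫ r in Ioc a b, ∫ s in Ioc a r, F s r :=
          setIntegral_congr_fun measurableSet_Ioc (fun r hr => trunc_lt_snd a b F hr)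
      _ = ∫ r in Ioc a b, ∫ s in Ioc a r, F r s := by
          apply integral_congr_ae
          filter_upwards with r
          apply integral_congr_ae
          filter_upwards with s
          exact hF1 s r
  rw [step1, step2, step3]
  ring

end ItoAux
/-- (Deterministic Itô formula for time-dependent norms.)
If `X_t = X_0 + ∫_0^t Y_s ds` with `Y ∈ L¹([0,T];H)`, then for every `t ∈ [0,T]`,
`|X_t|_t² = |X_0|² + ∫_0^t [2 (ι_s^* Y_s, X_s) + (X_s, Φ(s) X_s)] ds`. -/
theorem ito_formula_time_dependent_norm_deterministic
    {H : Type*} [NormedAddCommGroup H] [InnerProductSpace ℝ H] [CompleteSpace H]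
    (T : ℝ) (hT : 0 < T)
    (ip : ℝ → H → H → ℝ)
    (hsymm : ∀ t ∈ Icc (0:ℝ) T, ∀ x y : H, ip t x y = ip t y x)
    (hadd : ∀ t ∈ Icc (0:ℝ) T, ∀ x x' y : H, ip t (x + x') y = ip t x y + ip t x' y)
    (hsmul : ∀ t ∈ Icc (0:ℝ) T, ∀ (c : ℝ) (x y : H), ip t (c • x) y = c * ip t x y)
    (hip0 : ∀ x y : H, ip 0 x y = ⟪x, y⟫)
    (c1 : ℝ) (hc1 : 1 ≤ c1)
    (hC1 : ∀ t ∈ Icc (0:ℝ) T, ∀ x : H,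
      c1⁻¹ * ‖x‖ ≤ Real.sqrt (ip t x x) ∧ Real.sqrt (ip t x x) ≤ c1 * ‖x‖)
    (Φ : ℝ → H →L[ℝ] H)
    (hΦsa : ∀ t ∈ Icc (0:ℝ) T, ∀ x y : H, ⟪Φ t x, y⟫ = ⟪x, Φ t y⟫)
    (hΦmeas : AEStronglyMeasurable (fun t => Φ t) (volume.restrict (Icc (0:ℝ) T)))
    (hΦint : IntegrableOn (fun t => ‖Φ t‖) (Icc (0:ℝ) T))
    (hC2 : ∀ t ∈ Icc (0:ℝ) T, ∀ x : H, ip t x x - ⟪x, x⟫ = ∫ s in (0:ℝ)..t, ⟪x, Φ s x⟫)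
    (ι : ℝ → H →L[ℝ] H)
    (hι : ∀ t ∈ Icc (0:ℝ) T, ∀ x y : H, ⟪ι t x, y⟫ = ip t x y)
    (Y : ℝ → H) (hY : IntegrableOn Y (Icc (0:ℝ) T))
    (X : ℝ → H) (hX : ∀ t ∈ Icc (0:ℝ) T, X t = X 0 + ∫ s in (0:ℝ)..t, Y s)
    :
    ∀ t ∈ Icc (0:ℝ) T,
      ip t (X t) (X t)
        = ⟪X 0, X 0⟫ + ∫ s in (0:ℝ)..t, (2 * ⟪ι s (Y s), X s⟫ + ⟪X s, Φ s (X s)⟫) := by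
  intro t ht
  obtain ⟨ht0, htT⟩ := ht
  have hsubT : ∀ {a b : ℝ}, 0 ≤ a → b ≤ T → Ioc a b ⊆ Icc 0 T :=
    fun ha hb x hx => ⟨le_of_lt (lt_of_le_of_lt ha hx.1), hx.2.trans hb⟩
  have hsub : Ioc (0:ℝ) t ⊆ Icc 0 T := hsubT le_rfl htT
  have hmIoc : MeasurableSet (Ioc (0:ℝ) t) := measurableSet_Ioc
  -- X representation
  have hXeq : ∀ s ∈ Icc (0:ℝ) T, X s = X 0 + ∫ r in Ioc (0:ℝ) s, Y r := by
    intro s hs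
    rw [hX s hs, intervalIntegral.integral_of_le hs.1]
  have hYIoc : ∀ {a b : ℝ}, 0 ≤ a → b ≤ T → IntegrableOn Y (Ioc a b) :=
    fun ha hb => hY.mono_set (hsubT ha hb)
  have hY01 : IntegrableOn Y (Ioc 0 t) := hYIoc le_rfl htT
  have hdiff : ∀ a b : ℝ, 0 ≤ a → a ≤ b → b ≤ T → X b - X a = ∫ r in Ioc a b, Y r := by
    intro a b ha hab hbT
    have h1 := hXeq a ⟨ha, hab.trans hbT⟩
    have h2 := hXeq b ⟨ha.trans hab, hbT⟩
    have hu : Ioc 0 a ∪ Ioc a b = Ioc 0 b := Ioc_union_Ioc_eq_Ioc ha hab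
    have hsplit : (∫ r in Ioc 0 b, Y r) = (∫ r in Ioc 0 a, Y r) + ∫ r in Ioc a b, Y r := by
      rw [← hu, setIntegral_union (Ioc_disjoint_Ioc_of_le le_rfl) measurableSet_Ioc
        (hYIoc le_rfl (hab.trans hbT)) (hYIoc ha hbT)]
    rw [h1, h2, hsplit]
    abel
  -- continuity and bound for X
  have hXc : ContinuousOn X (Icc 0 T) := by
    have h := intervalIntegral.continuousOn_primitive (μ := volume) (f := Y) hY
    exact (continuousOn_const.add h).congr (fun s hs => hXeq s hs)
  set M : ℝ := ‖X 0‖ + ∫ r in Icc (0:ℝ) T, ‖Y r‖ with hMdef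
  have hM0 : 0 ≤ M :=
    add_nonneg (norm_nonneg _) (setIntegral_nonneg measurableSet_Icc fun r _ => norm_nonneg _)
  have hXbound : ∀ s ∈ Icc (0:ℝ) T, ‖X s‖ ≤ M := by
    intro s hs
    rw [hXeq s hs]
    calc ‖X 0 + ∫ r in Ioc 0 s, Y r‖ ≤ ‖X 0‖ + ‖∫ r in Ioc 0 s, Y r‖ := norm_add_le _ _
      _ ≤ ‖X 0‖ + ∫ r in Ioc 0 s, ‖Y r‖ :=
          add_le_add_right (norm_integral_le_integral_norm _) _
      _ ≤ M := add_le_add_right (setIntegral_mono_set hY.norm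
          (Filter.Eventually.of_forall fun r => norm_nonneg _)
          (HasSubset.Subset.eventuallyLE (hsubT le_rfl hs.2))) _
  -- Φ as Bochner integrable
  have hΦI : IntegrableOn Φ (Icc 0 T) := ⟨hΦmeas, (hasFiniteIntegral_norm_iff _).mp hΦint.2⟩
  have hΦIoc : ∀ {a b : ℝ}, 0 ≤ a → b ≤ T → IntegrableOn Φ (Ioc a b) :=
    fun ha hb => hΦI.mono_set (hsubT ha hb)
  have hΦnIoc : IntegrableOn (fun s => ‖Φ s‖) (Ioc 0 t) := hΦint.mono_set hsub
  set A : ℝ → H →L[ℝ] H := fun s => ∫ r in Ioc (0:ℝ) s, Φ r with hAdef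
  set CΦ : ℝ := ∫ r in Icc (0:ℝ) T, ‖Φ r‖ with hCΦdef
  have hCΦ0 : 0 ≤ CΦ := setIntegral_nonneg measurableSet_Icc fun r _ => norm_nonneg _
  have hAc : ContinuousOn A (Icc 0 T) := intervalIntegral.continuousOn_primitive hΦI
  have hAbound : ∀ s ∈ Icc (0:ℝ) T, ‖A s‖ ≤ CΦ := by
    intro s hs
    calc ‖A s‖ ≤ ∫ r in Ioc 0 s, ‖Φ r‖ := norm_integral_le_integral_norm _
      _ ≤ CΦ := setIntegral_mono_set hΦint
          (Filter.Eventually.of_forall fun r => norm_nonneg _)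
          (HasSubset.Subset.eventuallyLE (hsubT le_rfl hs.2))
  have hInnerA : ∀ s ∈ Icc (0:ℝ) T, ∀ x y : H,
      ⟪x, A s y⟫ = ∫ r in Ioc (0:ℝ) s, ⟪x, Φ r y⟫ := by
    intro s hs x y
    have hint : Integrable (fun r => Φ r y) (volume.restrict (Ioc (0:ℝ) s)) := by
      simpa using (ContinuousLinearMap.apply ℝ H y).integrable_comp (hΦIoc le_rfl hs.2)
    rw [show A s y = ∫ r in Ioc (0:ℝ) s, Φ r y from
      ContinuousLinearMap.integral_apply (hΦIoc le_rfl hs.2) y]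
    exact (integral_inner hint x).symm
  have hAsymm : ∀ s ∈ Icc (0:ℝ) T, ∀ x y : H, ⟪x, A s y⟫ = ⟪y, A s x⟫ := by
    intro s hs x y
    rw [hInnerA s hs x y, hInnerA s hs y x]
    refine setIntegral_congr_fun measurableSet_Ioc fun r hr => ?_
    have hrT : r ∈ Icc (0:ℝ) T := ⟨hr.1.le, hr.2.trans hs.2⟩
    rw [← hΦsa r hrT x y, real_inner_comm]
  have hpolar : ∀ s ∈ Icc (0:ℝ) T, ∀ x y : H, ip s x y = ⟪x, y⟫ + ⟪x, A s y⟫ := by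
    intro s hs x y
    have key : ∀ z : H, ip s z z = ⟪z, z⟫ + ⟪z, A s z⟫ := by
      intro z
      have h2 := hC2 s hs z
      rw [intervalIntegral.integral_of_le hs.1, ← hInnerA s hs z z] at h2
      linarith
    have e1 := key (x + y)
    have e2 := key x
    have e3 := key y
    have hipxy : ip s (x + y) (x + y)
        = ip s x x + ip s y y + (ip s x y + ip s y x) := by
      have a1 : ip s (x + y) (x + y) = ip s x (x + y) + ip s y (x + y) :=
        hadd s hs x y (x + y)
      have a2 : ip s x (x + y) = ip s x x + ip s y x := by
        rw [hsymm s hs x (x + y), hadd s hs x y x, hsymm s hs x x]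
      have a3 : ip s y (x + y) = ip s x y + ip s y y := by
        rw [hsymm s hs y (x + y), hadd s hs x y y, hsymm s hs y y]
      rw [a1, a2, a3, hsymm s hs y x]
      ring
    have hipsym := hsymm s hs x y
    have hinxy : ⟪x + y, x + y⟫ = ⟪x, x⟫ + ⟪y, y⟫ + 2 * ⟪x, y⟫ := by
      rw [real_inner_add_add_self]; ring
    have hiAxy : ⟪x + y, A s (x + y)⟫
        = ⟪x, A s x⟫ + ⟪y, A s y⟫ + 2 * ⟪x, A s y⟫ := by
      rw [map_add]
      simp only [inner_add_left, inner_add_right]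
      rw [hAsymm s hs y x]
      ring
    rw [hipxy, hinxy, hiAxy] at e1
    linarith
  -- measurability
  have hXm : AEStronglyMeasurable X (volume.restrict (Ioc (0:ℝ) t)) :=
    (hXc.mono hsub).aestronglyMeasurable hmIoc
  have hYm : AEStronglyMeasurable Y (volume.restrict (Ioc (0:ℝ) t)) := hY01.1
  have hΦm : AEStronglyMeasurable Φ (volume.restrict (Ioc (0:ℝ) t)) := (hΦIoc le_rfl htT).1
  have hAm : AEStronglyMeasurable A (volume.restrict (Ioc (0:ℝ) t)) :=
    (hAc.mono hsub).aestronglyMeasurable hmIoc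
  have happly : Continuous fun q : (H →L[ℝ] H) × H => q.1 q.2 :=
    isBoundedBilinearMap_apply.continuous
  have hinnerc : Continuous fun q : H × H => ⟪q.1, q.2⟫ := continuous_inner
  -- integrability of the various integrands on `Ioc 0 t`
  have hf1 : Integrable (fun s => ⟪Y s, X s⟫) (volume.restrict (Ioc (0:ℝ) t)) := by
    refine Integrable.mono' (hY01.norm.mul_const M)
      (hinnerc.comp_aestronglyMeasurable (hYm.prodMk hXm)) ?_
    filter_upwards [ae_restrict_mem hmIoc] with s hs
    calc ‖⟪Y s, X s⟫‖ ≤ ‖Y s‖ * ‖X s‖ := norm_inner_le_norm _ _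
      _ ≤ ‖Y s‖ * M := mul_le_mul_of_nonneg_left (hXbound s (hsub hs)) (norm_nonneg _)
  have hf2 : Integrable (fun s => ⟪X s, Φ s (X s)⟫) (volume.restrict (Ioc (0:ℝ) t)) := by
    refine Integrable.mono' (hΦnIoc.mul_const (M * M))
      (hinnerc.comp_aestronglyMeasurable (hXm.prodMk
        (happly.comp_aestronglyMeasurable (hΦm.prodMk hXm)))) ?_
    filter_upwards [ae_restrict_mem hmIoc] with s hs
    have hXs := hXbound s (hsub hs)
    have h1 : ‖Φ s (X s)‖ ≤ ‖Φ s‖ * M :=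
      ((Φ s).le_opNorm _).trans (mul_le_mul_of_nonneg_left hXs (norm_nonneg _))
    calc ‖⟪X s, Φ s (X s)⟫‖ ≤ ‖X s‖ * ‖Φ s (X s)‖ := norm_inner_le_norm _ _
      _ ≤ M * (‖Φ s‖ * M) :=
          mul_le_mul hXs h1 (norm_nonneg _) hM0
      _ = ‖Φ s‖ * (M * M) := by ring
  have hΦXt : Integrable (fun s => Φ s (X t)) (volume.restrict (Ioc (0:ℝ) t)) := by
    simpa using (ContinuousLinearMap.apply ℝ H (X t)).integrable_comp (hΦIoc le_rfl htT)
  have hf2' : Integrable (fun s => ⟪X t, Φ s (X t)⟫) (volume.restrict (Ioc (0:ℝ) t)) :=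
    hΦXt.const_inner (X t)
  have hg3 : Integrable (fun s => ⟪Y s, A s (X s)⟫) (volume.restrict (Ioc (0:ℝ) t)) := by
    refine Integrable.mono' (hY01.norm.mul_const (CΦ * M))
      (hinnerc.comp_aestronglyMeasurable (hYm.prodMk
        (happly.comp_aestronglyMeasurable (hAm.prodMk hXm)))) ?_
    filter_upwards [ae_restrict_mem hmIoc] with s hs
    have h1 : ‖A s (X s)‖ ≤ CΦ * M :=
      ((A s).le_opNorm _).trans
        (mul_le_mul (hAbound s (hsub hs)) (hXbound s (hsub hs)) (norm_nonneg _) hCΦ0)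
    calc ‖⟪Y s, A s (X s)⟫‖ ≤ ‖Y s‖ * ‖A s (X s)‖ := norm_inner_le_norm _ _
      _ ≤ ‖Y s‖ * (CΦ * M) := mul_le_mul_of_nonneg_left h1 (norm_nonneg _)
  -- Identity (I): the classical formula for ⟪X t, X t⟫
  have hXt : X t = X 0 + ∫ r in Ioc (0:ℝ) t, Y r := hXeq t ⟨ht0, htT⟩
  have hsqY : Integrable (fun p : ℝ × ℝ => ⟪Y p.1, Y p.2⟫)
      ((volume.restrict (Ioc (0:ℝ) t)).prod (volume.restrict (Ioc (0:ℝ) t))) := by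
    refine ItoAux.prodInt hY01.norm hY01.norm
      (hinnerc.comp_aestronglyMeasurable (hYm.comp_fst.prodMk hYm.comp_snd)) ?_
    exact Filter.Eventually.of_forall fun z => abs_real_inner_le_norm _ _
  have hIY : ⟪X t, X t⟫ = ⟪X 0, X 0⟫ + 2 * ∫ s in Ioc (0:ℝ) t, ⟪Y s, X s⟫ := by
    have hs1 := ItoAux.sq 0 t (fun s r => ⟪Y s, Y r⟫)
      (fun s r => real_inner_comm _ _) hsqY
    have hl : (∫ s in Ioc (0:ℝ) t, ∫ r in Ioc (0:ℝ) t, ⟪Y s, Y r⟫)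
        = ⟪(∫ r in Ioc (0:ℝ) t, Y r), (∫ r in Ioc (0:ℝ) t, Y r)⟫ := by
      calc (∫ s in Ioc (0:ℝ) t, ∫ r in Ioc (0:ℝ) t, ⟪Y s, Y r⟫)
          = ∫ s in Ioc (0:ℝ) t, ⟪Y s, (∫ r in Ioc (0:ℝ) t, Y r)⟫ :=
            setIntegral_congr_fun hmIoc fun s _ => integral_inner hY01 (Y s)
        _ = ∫ s in Ioc (0:ℝ) t, ⟪(∫ r in Ioc (0:ℝ) t, Y r), Y s⟫ :=
            setIntegral_congr_fun hmIoc fun s _ => real_inner_comm _ _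
        _ = ⟪(∫ r in Ioc (0:ℝ) t, Y r), (∫ r in Ioc (0:ℝ) t, Y r)⟫ :=
            integral_inner hY01 _
    have hr : (∫ s in Ioc (0:ℝ) t, ∫ r in Ioc (0:ℝ) s, ⟪Y s, Y r⟫)
        = ∫ s in Ioc (0:ℝ) t, ⟪Y s, X s - X 0⟫ := by
      refine setIntegral_congr_fun hmIoc fun s hs => ?_
      rw [integral_inner (hYIoc le_rfl (hsub hs).2) (Y s),
        ← hdiff 0 s le_rfl hs.1.le (hsub hs).2]
    have hsub' : (∫ s in Ioc (0:ℝ) t, ⟪Y s, X s - X 0⟫)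
        = (∫ s in Ioc (0:ℝ) t, ⟪Y s, X s⟫) - ∫ s in Ioc (0:ℝ) t, ⟪Y s, X 0⟫ := by
      rw [← integral_sub hf1 (hY01.inner_const (X 0))]
      exact setIntegral_congr_fun hmIoc fun s _ => inner_sub_right _ _ _
    have hX0It : ⟪X 0, (∫ r in Ioc (0:ℝ) t, Y r)⟫
        = ∫ s in Ioc (0:ℝ) t, ⟪Y s, X 0⟫ := by
      rw [← integral_inner hY01 (X 0)]
      exact setIntegral_congr_fun hmIoc fun s _ => real_inner_comm _ _
    rw [hl, hr, hsub'] at hs1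
    rw [hXt, real_inner_add_add_self, hX0It]
    linarith
  -- integrable kernel for the main triangle swap
  have hkerYΦX : Integrable (fun p : ℝ × ℝ => ⟪Y p.1, Φ p.2 (X p.1)⟫)
      ((volume.restrict (Ioc (0:ℝ) t)).prod (volume.restrict (Ioc (0:ℝ) t))) := by
    refine ItoAux.prodInt (hY01.norm.mul_const M) hΦnIoc
      (hinnerc.comp_aestronglyMeasurable (hYm.comp_fst.prodMk
        (happly.comp_aestronglyMeasurable (hΦm.comp_snd.prodMk hXm.comp_fst)))) ?_
    filter_upwards [ItoAux.ae_prod_mem hmIoc] with p hp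
    have hXp := hXbound p.1 (hsub hp.1)
    have h1 : ‖Φ p.2 (X p.1)‖ ≤ ‖Φ p.2‖ * M :=
      ((Φ p.2).le_opNorm _).trans (mul_le_mul_of_nonneg_left hXp (norm_nonneg _))
    calc |⟪Y p.1, Φ p.2 (X p.1)⟫| ≤ ‖Y p.1‖ * ‖Φ p.2 (X p.1)‖ := abs_real_inner_le_norm _ _
      _ ≤ ‖Y p.1‖ * (‖Φ p.2‖ * M) := mul_le_mul_of_nonneg_left h1 (norm_nonneg _)
      _ = ‖Y p.1‖ * M * ‖Φ p.2‖ := by ring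
  have htri := ItoAux.tri 0 t (fun s r => ⟪Y s, Φ r (X s)⟫) hkerYΦX
  have hg3eq : (∫ s in Ioc (0:ℝ) t, ⟪Y s, A s (X s)⟫)
      = ∫ s in Ioc (0:ℝ) t, ∫ r in Ioc (0:ℝ) s, ⟪Y s, Φ r (X s)⟫ :=
    setIntegral_congr_fun hmIoc fun s hs => hInnerA s (hsub hs) (Y s) (X s)
  -- per-s decomposition of ⟪X t, Φ s (X t)⟫
  have hper : ∀ s ∈ Ioc (0:ℝ) t,
      ⟪X t, Φ s (X t)⟫ = ⟪X s, Φ s (X s)⟫ + 2 * ∫ r in Ioc s t, ⟪Y r, Φ s (X r)⟫ := by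
    intro s hs
    have hsIcc := hsub hs
    have hYst : IntegrableOn Y (Ioc s t) := hYIoc hs.1.le htT
    have hYstm : AEStronglyMeasurable Y (volume.restrict (Ioc s t)) := hYst.1
    have hJ : X t - X s = ∫ r in Ioc s t, Y r := hdiff s t hs.1.le hs.2 htT
    have e0 : ⟪X t, Φ s (X t)⟫ = ⟪X s, Φ s (X s)⟫ + 2 * ⟪X t - X s, Φ s (X s)⟫
        + ⟪X t - X s, Φ s (X t - X s)⟫ := by
      have hXt' : X t = X s + (X t - X s) := by abel
      have expand : ⟪X s + (X t - X s), Φ s (X s + (X t - X s))⟫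
          = ⟪X s, Φ s (X s)⟫ + ⟪X s, Φ s (X t - X s)⟫ + ⟪X t - X s, Φ s (X s)⟫
            + ⟪X t - X s, Φ s (X t - X s)⟫ := by
        rw [map_add]
        simp only [inner_add_left, inner_add_right]
        ring
      have cross : ⟪X s, Φ s (X t - X s)⟫ = ⟪X t - X s, Φ s (X s)⟫ := by
        rw [← hΦsa s hsIcc (X s) (X t - X s), real_inner_comm]
      rw [← hXt'] at expand
      linarith
    have hΦYst : Integrable (fun r => Φ s (Y r)) (volume.restrict (Ioc s t)) := by
      simpa using (Φ s).integrable_comp hYst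
    have e1 : ⟪X t - X s, Φ s (X s)⟫ = ∫ r in Ioc s t, ⟪Y r, Φ s (X s)⟫ := by
      calc ⟪X t - X s, Φ s (X s)⟫ = ⟪Φ s (X s), X t - X s⟫ := real_inner_comm _ _
        _ = ⟪Φ s (X s), ∫ r in Ioc s t, Y r⟫ := by rw [hJ]
        _ = ∫ r in Ioc s t, ⟪Φ s (X s), Y r⟫ := (integral_inner hYst _).symm
        _ = ∫ r in Ioc s t, ⟪Y r, Φ s (X s)⟫ :=
            setIntegral_congr_fun measurableSet_Ioc fun r _ => real_inner_comm _ _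
    have hker : Integrable (fun p : ℝ × ℝ => ⟪Y p.1, Φ s (Y p.2)⟫)
        ((volume.restrict (Ioc s t)).prod (volume.restrict (Ioc s t))) := by
      refine ItoAux.prodInt hYst.norm (hYst.norm.const_mul ‖Φ s‖)
        (hinnerc.comp_aestronglyMeasurable (hYstm.comp_fst.prodMk
          ((Φ s).continuous.comp_aestronglyMeasurable hYstm.comp_snd))) ?_
      refine Filter.Eventually.of_forall fun p => ?_
      calc |⟪Y p.1, Φ s (Y p.2)⟫| ≤ ‖Y p.1‖ * ‖Φ s (Y p.2)‖ := abs_real_inner_le_norm _ _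
        _ ≤ ‖Y p.1‖ * (‖Φ s‖ * ‖Y p.2‖) :=
            mul_le_mul_of_nonneg_left ((Φ s).le_opNorm _) (norm_nonneg _)
    have hsq := ItoAux.sq s t (fun r u => ⟪Y r, Φ s (Y u)⟫)
      (fun r u => by
        show ⟪Y r, Φ s (Y u)⟫ = ⟪Y u, Φ s (Y r)⟫
        rw [← hΦsa s hsIcc (Y r) (Y u), real_inner_comm]) hker
    have hL : (∫ r in Ioc s t, ∫ u in Ioc s t, ⟪Y r, Φ s (Y u)⟫)
        = ⟪X t - X s, Φ s (X t - X s)⟫ := by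
      have hinner : ∀ r : H, ⟪r, Φ s (X t - X s)⟫ = ⟪r, Φ s (X t - X s)⟫ := fun _ => rfl
      calc (∫ r in Ioc s t, ∫ u in Ioc s t, ⟪Y r, Φ s (Y u)⟫)
          = ∫ r in Ioc s t, ⟪Y r, Φ s (X t - X s)⟫ := by
            refine setIntegral_congr_fun measurableSet_Ioc fun r _ => ?_
            calc (∫ u in Ioc s t, ⟪Y r, Φ s (Y u)⟫)
                = ⟪Y r, ∫ u in Ioc s t, Φ s (Y u)⟫ := integral_inner hΦYst (Y r)
              _ = ⟪Y r, Φ s (∫ u in Ioc s t, Y u)⟫ := by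
                  rw [ContinuousLinearMap.integral_comp_comm (Φ s) hYst]
              _ = ⟪Y r, Φ s (X t - X s)⟫ := by rw [← hJ]
        _ = ∫ r in Ioc s t, ⟪Φ s (X t - X s), Y r⟫ :=
            setIntegral_congr_fun measurableSet_Ioc fun r _ => real_inner_comm _ _
        _ = ⟪Φ s (X t - X s), ∫ r in Ioc s t, Y r⟫ := integral_inner hYst _
        _ = ⟪X t - X s, Φ s (X t - X s)⟫ := by rw [← hJ, real_inner_comm]
    have hRin : ∀ r ∈ Ioc s t,
        (∫ u in Ioc s r, ⟪Y r, Φ s (Y u)⟫) = ⟪Y r, Φ s (X r - X s)⟫ := by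
      intro r hr
      have hYsr : IntegrableOn Y (Ioc s r) := hYIoc hs.1.le (hr.2.trans htT)
      have hΦYsr : Integrable (fun u => Φ s (Y u)) (volume.restrict (Ioc s r)) := by
        simpa using (Φ s).integrable_comp hYsr
      calc (∫ u in Ioc s r, ⟪Y r, Φ s (Y u)⟫)
          = ⟪Y r, ∫ u in Ioc s r, Φ s (Y u)⟫ := integral_inner hΦYsr (Y r)
        _ = ⟪Y r, Φ s (∫ u in Ioc s r, Y u)⟫ := by
            rw [ContinuousLinearMap.integral_comp_comm (Φ s) hYsr]
        _ = ⟪Y r, Φ s (X r - X s)⟫ := by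
            rw [← hdiff s r hs.1.le hr.1.le (hr.2.trans htT)]
    have e2 : ⟪X t - X s, Φ s (X t - X s)⟫
        = 2 * ∫ r in Ioc s t, ⟪Y r, Φ s (X r - X s)⟫ := by
      rw [← hL, hsq]
      congr 1
      exact setIntegral_congr_fun measurableSet_Ioc fun r hr => hRin r hr
    have hi1 : Integrable (fun r => ⟪Y r, Φ s (X s)⟫) (volume.restrict (Ioc s t)) :=
      hYst.inner_const _
    have hi2 : Integrable (fun r => ⟪Y r, Φ s (X r - X s)⟫)
        (volume.restrict (Ioc s t)) := by
      refine Integrable.mono' (hYst.norm.mul_const (‖Φ s‖ * (M + M)))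
        (hinnerc.comp_aestronglyMeasurable (hYstm.prodMk
          ((Φ s).continuous.comp_aestronglyMeasurable
            (((hXc.mono (hsubT hs.1.le htT)).aestronglyMeasurable measurableSet_Ioc).sub
              aestronglyMeasurable_const)))) ?_
      filter_upwards [ae_restrict_mem measurableSet_Ioc] with r hr
      have hXr := hXbound r (hsubT hs.1.le htT hr)
      have hXs := hXbound s hsIcc
      have h1 : ‖X r - X s‖ ≤ M + M := (norm_sub_le _ _).trans (add_le_add hXr hXs)
      have h2 : ‖Φ s (X r - X s)‖ ≤ ‖Φ s‖ * (M + M) :=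
        ((Φ s).le_opNorm _).trans (mul_le_mul_of_nonneg_left h1 (norm_nonneg _))
      calc ‖⟪Y r, Φ s (X r - X s)⟫‖ ≤ ‖Y r‖ * ‖Φ s (X r - X s)‖ := norm_inner_le_norm _ _
        _ ≤ ‖Y r‖ * (‖Φ s‖ * (M + M)) := mul_le_mul_of_nonneg_left h2 (norm_nonneg _)
    have hadd' : (∫ r in Ioc s t, ⟪Y r, Φ s (X r)⟫)
        = (∫ r in Ioc s t, ⟪Y r, Φ s (X s)⟫) + ∫ r in Ioc s t, ⟪Y r, Φ s (X r - X s)⟫ := by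
      rw [← integral_add hi1 hi2]
      refine setIntegral_congr_fun measurableSet_Ioc fun r _ => ?_
      rw [← inner_add_right, ← map_add, add_sub_cancel]
    rw [e0, e1, e2]
    rw [hadd']
    ring
  -- assemble the Φ part
  have hGint : Integrable (fun s => 2 * ∫ r in Ioc s t, ⟪Y r, Φ s (X r)⟫)
      (volume.restrict (Ioc (0:ℝ) t)) := by
    refine (hf2'.sub hf2).congr ?_
    filter_upwards [ae_restrict_mem hmIoc] with s hs
    have h := hper s hs
    show ⟪X t, Φ s (X t)⟫ - ⟪X s, Φ s (X s)⟫ = 2 * ∫ r in Ioc s t, ⟪Y r, Φ s (X r)⟫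
    linarith
  have hstep : (∫ s in Ioc (0:ℝ) t, ⟪X t, Φ s (X t)⟫)
      = (∫ s in Ioc (0:ℝ) t, ⟪X s, Φ s (X s)⟫)
        + 2 * ∫ s in Ioc (0:ℝ) t, ⟪Y s, A s (X s)⟫ := by
    have h1 : (∫ s in Ioc (0:ℝ) t, ⟪X t, Φ s (X t)⟫)
        = ∫ s in Ioc (0:ℝ) t,
            (⟪X s, Φ s (X s)⟫ + 2 * ∫ r in Ioc s t, ⟪Y r, Φ s (X r)⟫) :=
      setIntegral_congr_fun hmIoc fun s hs => hper s hs
    rw [h1, integral_add hf2 hGint]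
    congr 1
    rw [hg3eq, htri, ← integral_const_mul]
  -- right-hand side
  have hRHS : (∫ s in (0:ℝ)..t, (2 * ⟪ι s (Y s), X s⟫ + ⟪X s, Φ s (X s)⟫))
      = 2 * (∫ s in Ioc (0:ℝ) t, ⟪Y s, X s⟫)
        + 2 * (∫ s in Ioc (0:ℝ) t, ⟪Y s, A s (X s)⟫)
        + ∫ s in Ioc (0:ℝ) t, ⟪X s, Φ s (X s)⟫ := by
    rw [intervalIntegral.integral_of_le ht0]
    have h1 : ∀ s ∈ Ioc (0:ℝ) t,
        2 * ⟪ι s (Y s), X s⟫ + ⟪X s, Φ s (X s)⟫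
          = (2 * ⟪Y s, X s⟫ + 2 * ⟪Y s, A s (X s)⟫) + ⟪X s, Φ s (X s)⟫ := by
      intro s hs
      rw [hι s (hsub hs) (Y s) (X s), hpolar s (hsub hs) (Y s) (X s)]
      ring
    have h2 : (∫ s in Ioc (0:ℝ) t, (2 * ⟪ι s (Y s), X s⟫ + ⟪X s, Φ s (X s)⟫))
        = ∫ s in Ioc (0:ℝ) t,
            ((2 * ⟪Y s, X s⟫ + 2 * ⟪Y s, A s (X s)⟫) + ⟪X s, Φ s (X s)⟫) :=
      setIntegral_congr_fun hmIoc h1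
    have hadd12 : Integrable
        (fun s => 2 * ⟪Y s, X s⟫ + 2 * ⟪Y s, A s (X s)⟫) (volume.restrict (Ioc (0:ℝ) t)) :=
      (hf1.const_mul 2).add (hg3.const_mul 2)
    rw [h2, integral_add hadd12 hf2,
      integral_add (hf1.const_mul 2) (hg3.const_mul 2),
      integral_const_mul, integral_const_mul]
  -- final assembly
  have hC2t := hC2 t ⟨ht0, htT⟩ (X t)
  rw [intervalIntegral.integral_of_le ht0] at hC2t
  rw [hRHS]
  linarith [hC2t, hIY, hstep]
end
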